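/- arXiv:2404.18242 — 2 statements merged into one kernel-verified Lean document; each statement's English description precedes it below -/
import Mathlib

section
/- Under Assumptions (A1) and (A3), define for ε, δ > 0 and s ≥ 0: M₃^{ε,δ}(s) := (1/ε)·κ'(x(s))·∫_{π_δ(s)}^{s} ( f(x^δ(r)) − f(x^δ(π_δ(r))) ) dr + (1/ε)·κ'(x(s))·( f(x^δ(π_δ(s))) − f(x(π_δ(s))) )·(s − π_δ(s)). Then for every integer p ≥ 1 there exist ε₀ > 0 and a constant C > 0, independent of t, ε and δ, such that for all ε, δ ∈ (0, ε₀) and all t ≥ 0: |∫₀ᵗ E(s,t)·M₃^{ε,δ}(s) ds|^p ≤ C·(δ^p/ε^p)·(δ^p + ε^p + δ^{p/2}·ε^p) + C·δ^{2p}/ε^p. -/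
open Set MeasureTheory Filter Topology intervalIntegral


/-- The sampling map `π_δ(t) = δ·⌊t/δ⌋`. -/
noncomputable def piD (δ t : ℝ) : ℝ := δ * (⌊t / δ⌋ : ℤ)

lemma piD_nonneg {δ t : ℝ} (hδ : 0 < δ) (ht : 0 ≤ t) : 0 ≤ piD δ t := by
  have h : (0:ℤ) ≤ ⌊t / δ⌋ := Int.floor_nonneg.2 (div_nonneg ht hδ.le)
  have h2 : (0:ℝ) ≤ (⌊t / δ⌋ : ℤ) := by exact_mod_cast h
  exact mul_nonneg hδ.le h2

lemma piD_le {δ t : ℝ} (hδ : 0 < δ) (ht : 0 ≤ t) : piD δ t ≤ t := by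
  have h : ((⌊t / δ⌋ : ℤ) : ℝ) ≤ t / δ := Int.floor_le _
  have h2 : δ * ((⌊t / δ⌋ : ℤ) : ℝ) ≤ δ * (t / δ) := by
    exact mul_le_mul_of_nonneg_left h hδ.le
  have h3 : δ * (t / δ) = t := by field_simp
  unfold piD; linarith

lemma sub_piD_lt {δ : ℝ} (hδ : 0 < δ) (t : ℝ) : t - piD δ t < δ := by
  have h : t / δ - 1 < ((⌊t / δ⌋ : ℤ) : ℝ) := by exact_mod_cast Int.sub_one_lt_floor (t / δ)
  have h2 : δ * (t / δ - 1) < δ * ((⌊t / δ⌋ : ℤ) : ℝ) := by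
    exact (mul_lt_mul_iff_right₀ hδ).2 h
  have h3 : δ * (t / δ) = t := by field_simp
  unfold piD; nlinarith

lemma piD_eventually_const {δ : ℝ} (hδ : 0 < δ) (s : ℝ) :
    ∀ᶠ u in 𝓝[Set.Ici s] s, piD δ u = piD δ s := by
  have hlt : s < piD δ s + δ := by have := sub_piD_lt hδ s; linarith
  have hmem : Set.Iio (piD δ s + δ) ∈ 𝓝[Set.Ici s] s :=
    mem_nhdsWithin_of_mem_nhds (Iio_mem_nhds hlt)
  filter_upwards [hmem, self_mem_nhdsWithin] with u hu1 hu2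
  have hsu : s ≤ u := hu2
  have hfloor : ⌊u / δ⌋ = ⌊s / δ⌋ := by
    rw [Int.floor_eq_iff]
    constructor
    · calc ((⌊s / δ⌋ : ℤ) : ℝ) ≤ s / δ := Int.floor_le _
        _ ≤ u / δ := by gcongr
    · have : u < δ * ((⌊s / δ⌋ : ℤ) : ℝ) + δ := hu1
      rw [div_lt_iff₀ hδ]
      push_cast
      nlinarith
  unfold piD; rw [hfloor]

lemma measurable_comp_piD (z : ℝ → ℝ) (δ : ℝ) : Measurable fun s : ℝ => z (piD δ s) := by
  have h1 : Measurable fun s : ℝ => ⌊s / δ⌋ := (measurable_id.div_const δ).floor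
  exact ((measurable_from_top (f := fun n : ℤ => z (δ * (n : ℝ)))).comp h1 : _)

lemma abs_deriv_le_of_lipschitz {κ : ℝ → ℝ} (hκd : Differentiable ℝ κ) {L : ℝ}
    (hLip : ∀ a b : ℝ, |κ a - κ b| ≤ L * |a - b|) (y : ℝ) : |deriv κ y| ≤ L := by
  have h := (hκd y).hasDerivAt
  rw [hasDerivAt_iff_tendsto_slope] at h
  have habs : Tendsto (fun z => |slope κ y z|) (𝓝[≠] y) (𝓝 |deriv κ y|) := h.abs
  refine le_of_tendsto habs ?_
  filter_upwards [self_mem_nhdsWithin] with z hz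
  have hzy : (0:ℝ) < |z - y| := abs_pos.2 (sub_ne_zero.2 hz)
  rw [slope_def_field, abs_div, div_le_iff₀ hzy]
  exact hLip z y

lemma main_reg (f κ : ℝ → ℝ) (hfc : Continuous f) (hκc : Continuous κ)
    (lam γ y₀ Bc Mf : ℝ) (hlam : 0 < lam)
    (hcontr : ∀ a b : ℝ, (a - b) * (f a - f b) ≤ -lam * (a - b) ^ 2)
    (hκbd : ∀ a : ℝ, |κ a| ≤ γ)
    (hBc : Bc = max |y₀| ((|f 0| + γ) / lam) + 1)
    (hMf : ∀ z : ℝ, |z| ≤ Bc → |f z| ≤ Mf)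
    (w : ℝ → ℝ)
    (hw : ∀ s : ℝ, 0 ≤ s → 0 ≤ w s ∧ w s ≤ s)
    (hwm : w = id ∨ ∀ z : ℝ → ℝ, Measurable fun s => z (w s))
    (hwrc : ∀ (z : ℝ → ℝ) (s τ : ℝ), 0 ≤ s → s < τ → ContinuousOn z (Set.Ico 0 τ) →
      ContinuousWithinAt (fun u => z (w u)) (Set.Ici s) s)
    (y : ℝ → ℝ)
    (hy : ∀ t : ℝ, 0 ≤ t → y t = y₀ + ∫ s in (0:ℝ)..t, (f (y s) + κ (y (w s)))) :
    (∀ T : ℝ, 0 ≤ T → IntervalIntegrable (fun s => f (y s) + κ (y (w s))) volume 0 T) ∧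
      ContinuousOn y (Set.Ici 0) ∧
      (∀ s : ℝ, 0 ≤ s → |y s| ≤ Bc) ∧
      (∀ s : ℝ, 0 ≤ s → HasDerivWithinAt y (f (y s) + κ (y (w s))) (Set.Ici s) s) := by
  set G : ℝ → ℝ := fun s => f (y s) + κ (y (w s)) with hG
  have hBc1 : |y₀| ≤ Bc - 1 := by rw [hBc]; simp only [add_sub_cancel_right]; exact le_max_left _ _
  have hBcf : (|f 0| + γ) / lam ≤ Bc - 1 := by
    rw [hBc]; simp only [add_sub_cancel_right]; exact le_max_right _ _
  have hBc0 : 0 < Bc := by nlinarith [abs_nonneg y₀]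
  -- H1 : continuity from integrability
  have H1 : ∀ b : ℝ, 0 ≤ b → IntervalIntegrable G volume 0 b → ContinuousOn y (Icc 0 b) := by
    intro b hb hI
    have hprim := intervalIntegral.continuousOn_primitive_interval' hI
      (by rw [uIcc_of_le hb]; exact left_mem_Icc.2 hb)
    rw [uIcc_of_le hb] at hprim
    exact (continuousOn_const.add hprim).congr fun u hu => hy u hu.1
  -- measurability on nice sets
  have haem : ∀ A : Set ℝ, MeasurableSet A → ContinuousOn y A →
      AEMeasurable G (volume.restrict A) := by
    intro A hA hyA
    have h1 : AEMeasurable (fun s => f (y s)) (volume.restrict A) :=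
      (hfc.comp_continuousOn hyA).aemeasurable hA
    have h2 : AEMeasurable (fun s => y (w s)) (volume.restrict A) := by
      rcases hwm with rfl | hm
      · exact hyA.aemeasurable hA
      · exact (hm y).aemeasurable
    exact h1.add (hκc.measurable.comp_aemeasurable h2)
  -- integrability of bounded measurable
  have hIbd : ∀ A : Set ℝ, MeasurableSet A → (volume A < ⊤) →
      AEMeasurable G (volume.restrict A) → (∀ s ∈ A, |y s| ≤ Bc) → IntegrableOn G A volume := by
    intro A hA hAfin hmeas hbd
    refine Integrable.mono' (g := fun _ => Mf + γ) (integrableOn_const hAfin.ne)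
      hmeas.aestronglyMeasurable ?_
    rw [ae_restrict_iff' hA]
    refine Eventually.of_forall fun s hs => ?_
    have h1 : |f (y s)| ≤ Mf := hMf _ (hbd s hs)
    have h2 : |κ (y (w s))| ≤ γ := hκbd _
    calc ‖G s‖ = |f (y s) + κ (y (w s))| := rfl
      _ ≤ |f (y s)| + |κ (y (w s))| := abs_add_le _ _
      _ ≤ Mf + γ := add_le_add h1 h2
  -- H3 : right derivative
  have H3 : ∀ s b : ℝ, 0 ≤ s → s < b → IntervalIntegrable G volume 0 b →
      ContinuousOn y (Ico 0 b) → HasDerivWithinAt y (G s) (Ici s) s := by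
    intro s b hs0 hsb hI hyc
    have hsbI : Ico 0 b ∈ 𝓝[Ici s] s := by
      rw [mem_nhdsWithin]
      exact ⟨Iio b, isOpen_Iio, hsb, fun u hu => ⟨le_trans hs0 hu.2, hu.1⟩⟩
    have hycs : ContinuousWithinAt y (Ici s) s :=
      (hyc s ⟨hs0, hsb⟩).mono_of_mem_nhdsWithin hsbI
    have hG1 : ContinuousWithinAt (fun u => f (y u)) (Ici s) s :=
      hfc.continuousAt.comp_continuousWithinAt hycs
    have hG2 : ContinuousWithinAt (fun u => κ (y (w u))) (Ici s) s :=
      hκc.continuousAt.comp_continuousWithinAt (hwrc y s b hs0 hsb hyc)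
    have hGc : ContinuousWithinAt G (Ici s) s := hG1.add hG2
    have hIs : IntervalIntegrable G volume 0 s := hI.mono_set (by
      rw [uIcc_of_le hs0, uIcc_of_le (le_trans hs0 hsb.le)]
      exact Icc_subset_Icc le_rfl hsb.le)
    have hmeas : StronglyMeasurableAtFilter G (𝓝[>] s) volume :=
      ⟨Ioo s b, Ioo_mem_nhdsGT hsb,
        (haem _ measurableSet_Ioo
          (hyc.mono fun u hu => ⟨le_trans hs0 hu.1.le, hu.2⟩)).aestronglyMeasurable⟩
    have hftc := intervalIntegral.integral_hasDerivWithinAt_right (s := Ici s) (t := Ioi s)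
      hIs hmeas (hGc.mono Ioi_subset_Ici_self)
    exact (hftc.const_add y₀).congr (fun u hu => hy u (le_trans hs0 hu)) (hy s hs0)
  -- H4 : boundedness
  have H4 : ∀ τ b : ℝ, 0 ≤ τ → τ < b → IntervalIntegrable G volume 0 b →
      ContinuousOn y (Icc 0 b) → ∀ u ∈ Icc 0 τ, |y u| ≤ Bc := by
    intro τ b hτ0 hτb hI hyc
    have hy0 : y 0 = y₀ := by
      have := hy 0 le_rfl; simpa [intervalIntegral.integral_same] using this
    have hder : ∀ u ∈ Ico 0 τ, HasDerivWithinAt (fun v => (y v)^2) (2 * y u * G u) (Ici u) u := by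
      intro u hu
      have h := (H3 u b hu.1 (lt_trans hu.2 hτb) hI (hyc.mono Ico_subset_Icc_self)).pow 2
      norm_num at h
      exact h
    have key : ∀ u ∈ Icc 0 τ, (y u)^2 ≤ Bc^2 := by
      refine image_le_of_deriv_right_lt_deriv_boundary'
        (f' := fun u => 2 * y u * G u) (B := fun _ => Bc^2) (B' := fun _ => (0:ℝ))
        ((hyc.mono (Icc_subset_Icc le_rfl hτb.le)).pow 2) hder ?_ continuousOn_const
        (fun u _ => hasDerivWithinAt_const _ _ _) ?_
      · show (y 0)^2 ≤ Bc^2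
        rw [hy0]
        have hBcge1 : 1 ≤ Bc := by nlinarith [abs_nonneg y₀]
        nlinarith [abs_nonneg y₀, sq_abs y₀]
      · rintro u hu hequ
        have hequ' : y u ^ 2 = Bc ^ 2 := hequ
        have habs : |y u| = Bc := by
          have h7 : (|y u| - Bc) * (|y u| + Bc) = 0 := by
            have h8 : |y u| ^ 2 = Bc ^ 2 := by rw [sq_abs]; exact hequ'
            linear_combination h8
          rcases mul_eq_zero.mp h7 with h | h
          · linarith
          · nlinarith [abs_nonneg (y u)]
        have h1 : y u * (f (y u) - f 0) ≤ -lam * (y u)^2 := by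
          have := hcontr (y u) 0; simpa using this
        have h2 : y u * f 0 ≤ |y u| * |f 0| :=
          le_trans (le_abs_self _) (le_of_eq (abs_mul _ _))
        have h3 : y u * κ (y (w u)) ≤ |y u| * γ :=
          le_trans (le_abs_self _) (le_trans (le_of_eq (abs_mul _ _))
            (mul_le_mul_of_nonneg_left (hκbd _) (abs_nonneg _)))
        have hlamBc : |f 0| + γ < lam * Bc := by
          have h5 : (|f 0| + γ) / lam ≤ Bc - 1 := hBcf
          rw [div_le_iff₀ hlam] at h5
          nlinarith
        have hexp : y u * G u = y u * (f (y u) - f 0) + y u * f 0 + y u * κ (y (w u)) := by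
          simp only [hG]; ring
        rw [hequ'] at h1
        rw [habs] at h2 h3
        have h6 : Bc * (|f 0| + γ) < Bc * (lam * Bc) := (mul_lt_mul_iff_right₀ hBc0).2 hlamBc
        show 2 * y u * G u < 0
        nlinarith [h1, h2, h3, h6, hexp]
    intro u hu
    have hk : (y u)^2 ≤ Bc^2 := key u hu
    nlinarith [hk, sq_abs (y u), abs_nonneg (y u), hBc0]
  -- main induction: integrability on every [0, T]
  have main : ∀ T : ℝ, 0 ≤ T → IntervalIntegrable G volume 0 T := by
    intro T hT
    set S : Set ℝ := {τ | τ ∈ Icc 0 T ∧ IntervalIntegrable G volume 0 τ} with hS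
    have hS0 : (0:ℝ) ∈ S := ⟨⟨le_rfl, hT⟩, IntervalIntegrable.refl⟩
    have hbdd : BddAbove S := ⟨T, fun τ hτ => hτ.1.2⟩
    have hne : S.Nonempty := ⟨0, hS0⟩
    set τs := sSup S with hτs
    have hτs0 : 0 ≤ τs := le_csSup hbdd hS0
    have hτsT : τs ≤ T := csSup_le hne fun τ hτ => hτ.1.2
    have hmemlt : ∀ τ : ℝ, 0 ≤ τ → τ < τs →
        IntervalIntegrable G volume 0 τ ∧ ∃ b ∈ S, τ < b := by
      intro τ hτ0 hτlt
      obtain ⟨b, hbS, hτb⟩ := exists_lt_of_lt_csSup hne hτlt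
      refine ⟨hbS.2.mono_set ?_, b, hbS, hτb⟩
      rw [uIcc_of_le hτ0, uIcc_of_le hbS.1.1]
      exact Icc_subset_Icc le_rfl hτb.le
    have hcA : ContinuousOn y (Ico 0 τs) := by
      intro s hs
      obtain ⟨_, b, hbS, hsb⟩ := hmemlt s hs.1 hs.2
      refine ((H1 b hbS.1.1 hbS.2) s ⟨hs.1, hsb.le⟩).mono_of_mem_nhdsWithin ?_
      rw [mem_nhdsWithin]
      exact ⟨Iio b, isOpen_Iio, hsb, fun u hu => ⟨hu.2.1, hu.1.le⟩⟩
    have hbA : ∀ s ∈ Ico 0 τs, |y s| ≤ Bc := by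
      intro s hs
      obtain ⟨_, b, hbS, hsb⟩ := hmemlt s hs.1 hs.2
      exact H4 s b hs.1 hsb hbS.2 (H1 b hbS.1.1 hbS.2) s ⟨hs.1, le_rfl⟩
    have hIτs : IntervalIntegrable G volume 0 τs := by
      have hIco : IntegrableOn G (Ico 0 τs) volume :=
        hIbd _ measurableSet_Ico measure_Ico_lt_top (haem _ measurableSet_Ico hcA) hbA
      rw [intervalIntegrable_iff_integrableOn_Ioc_of_le hτs0]
      rw [IntegrableOn, ← Measure.restrict_congr_set Ioo_ae_eq_Ioc]
      exact hIco.mono_set Ioo_subset_Ico_self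
    rcases eq_or_lt_of_le hτsT with heq | hlt
    · exact heq ▸ hIτs
    · exfalso
      have hconst : ∀ u : ℝ, τs < u → u ≤ T → y u = y₀ := by
        intro u hu1 hu2
        have hnotS : u ∉ S := fun huS => absurd (le_csSup hbdd huS) (not_le.2 hu1)
        have hnotint : ¬ IntervalIntegrable G volume 0 u := fun h =>
          hnotS ⟨⟨le_trans hτs0 hu1.le, hu2⟩, h⟩
        have := hy u (le_trans hτs0 hu1.le)
        rwa [intervalIntegral.integral_undef hnotint, add_zero] at this
      have hycD : ContinuousOn y (Ioc τs T) :=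
        continuousOn_const.congr fun u hu => hconst u hu.1 hu.2
      have hbD : ∀ s ∈ Ioc τs T, |y s| ≤ Bc := by
        intro s hs; rw [hconst s hs.1 hs.2]; nlinarith [hBc1, abs_nonneg y₀]
      have hID : IntegrableOn G (Ioc τs T) volume :=
        hIbd _ measurableSet_Ioc measure_Ioc_lt_top (haem _ measurableSet_Ioc hycD) hbD
      have hC : IntegrableOn G (Ioc 0 τs) volume := by
        rw [← intervalIntegrable_iff_integrableOn_Ioc_of_le hτs0]; exact hIτs
      have hUT : IntervalIntegrable G volume 0 T := by
        rw [intervalIntegrable_iff_integrableOn_Ioc_of_le hT,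
          ← Ioc_union_Ioc_eq_Ioc hτs0 hτsT]
        exact hC.union hID
      exact absurd (le_csSup hbdd ⟨⟨hT, le_rfl⟩, hUT⟩) (not_le.2 hlt)
  have hcont : ContinuousOn y (Ici 0) := by
    intro s hs
    have hs' : (0:ℝ) ≤ s := hs
    refine ((H1 (s+1) (by linarith) (main (s+1) (by linarith))) s ⟨hs', by linarith⟩).mono_of_mem_nhdsWithin ?_
    rw [mem_nhdsWithin]
    exact ⟨Iio (s+1), isOpen_Iio, by simp, fun u hu => ⟨hu.2, hu.1.le⟩⟩
  refine ⟨main, hcont, ?_, ?_⟩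
  · intro s hs
    exact H4 s (s+1) hs (by linarith) (main _ (by linarith))
      (H1 _ (by linarith) (main _ (by linarith))) s ⟨hs, le_rfl⟩
  · intro s hs
    exact H3 s (s+1) hs (by linarith) (main _ (by linarith))
      ((H1 _ (by linarith) (main _ (by linarith))).mono Ico_subset_Icc_self)

lemma gronwall_est (f κ : ℝ → ℝ) (lam Lκ Mf γ Cg δ : ℝ)
    (hδ : 0 < δ) (hLκ : 0 < Lκ) (hMf0 : 0 < Mf + γ) (hgap2 : 0 < lam - Lκ)
    (hCg0 : 0 < Cg)
    (hCgdef : Cg = 2 * Lκ * (Mf + γ) / (lam - Lκ))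
    (hcontr : ∀ a b : ℝ, (a - b) * (f a - f b) ≤ -lam * (a - b) ^ 2)
    (hκLip : ∀ a b : ℝ, |κ a - κ b| ≤ Lκ * |a - b|)
    (x y : ℝ → ℝ)
    (hcx : ContinuousOn x (Set.Ici 0)) (hcy : ContinuousOn y (Set.Ici 0))
    (hdx : ∀ s : ℝ, 0 ≤ s → HasDerivWithinAt x (f (x s) + κ (x s)) (Set.Ici s) s)
    (hdy : ∀ s : ℝ, 0 ≤ s → HasDerivWithinAt y (f (y s) + κ (y (piD δ s))) (Set.Ici s) s)
    (heq0 : x 0 = y 0)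
    (hstep : ∀ r : ℝ, 0 ≤ r → |y r - y (piD δ r)| ≤ (Mf + γ) * δ) :
    ∀ s : ℝ, 0 ≤ s → |x s - y s| ≤ Cg * δ := by
  intro s hs
  have hD0 : 0 < Cg * δ := mul_pos hCg0 hδ
  have hDkey : (lam - Lκ) * (Cg * δ) = 2 * Lκ * (Mf + γ) * δ := by
    rw [hCgdef]; field_simp
  have key : ∀ u ∈ Icc 0 s, (x u - y u)^2 ≤ (Cg * δ)^2 := by
    refine image_le_of_deriv_right_lt_deriv_boundary'
      (f' := fun u => 2 * (x u - y u) *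
        ((f (x u) + κ (x u)) - (f (y u) + κ (y (piD δ u)))))
      (B := fun _ => (Cg * δ)^2) (B' := fun _ => (0:ℝ)) ?_ ?_ ?_ continuousOn_const
      (fun u _ => hasDerivWithinAt_const _ _ _) ?_
    · exact (((hcx.mono fun u hu => hu.1).sub (hcy.mono fun u hu => hu.1)).pow 2)
    · intro u hu
      have h3 := ((hdx u hu.1).sub (hdy u hu.1)).pow 2
      norm_num at h3
      exact h3
    · show (x 0 - y 0)^2 ≤ (Cg * δ)^2
      rw [heq0, sub_self]
      simpa using sq_nonneg (Cg * δ)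
    · rintro u hu hequ
      have hequ' : (x u - y u) ^ 2 = (Cg * δ) ^ 2 := hequ
      have habs : |x u - y u| = Cg * δ := by
        have h7 : (|x u - y u| - Cg * δ) * (|x u - y u| + Cg * δ) = 0 := by
          have h8 : |x u - y u| ^ 2 = (Cg * δ) ^ 2 := by rw [sq_abs]; exact hequ'
          linear_combination h8
        rcases mul_eq_zero.mp h7 with h | h
        · linarith
        · nlinarith [abs_nonneg (x u - y u)]
      have hA : (x u - y u) * (f (x u) - f (y u)) ≤ -lam * (x u - y u)^2 :=
        hcontr (x u) (y u)
      have hB2 : (x u - y u) * (κ (x u) - κ (y (piD δ u)))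
          ≤ |x u - y u| * (Lκ * (|x u - y u| + (Mf + γ) * δ)) := by
        have h4 : |κ (x u) - κ (y (piD δ u))| ≤ Lκ * |x u - y (piD δ u)| := hκLip _ _
        have h5 : |x u - y (piD δ u)| ≤ |x u - y u| + (Mf + γ) * δ := by
          have h6 := hstep u hu.1
          have h9 : x u - y (piD δ u) = (x u - y u) + (y u - y (piD δ u)) := by ring
          rw [h9]
          exact le_trans (abs_add_le _ _) (by linarith)
        calc (x u - y u) * (κ (x u) - κ (y (piD δ u)))
            ≤ |(x u - y u) * (κ (x u) - κ (y (piD δ u)))| := le_abs_self _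
          _ = |x u - y u| * |κ (x u) - κ (y (piD δ u))| := abs_mul _ _
          _ ≤ |x u - y u| * (Lκ * |x u - y (piD δ u)|) :=
              mul_le_mul_of_nonneg_left h4 (abs_nonneg _)
          _ ≤ |x u - y u| * (Lκ * (|x u - y u| + (Mf + γ) * δ)) := by
              refine mul_le_mul_of_nonneg_left ?_ (abs_nonneg _)
              exact mul_le_mul_of_nonneg_left h5 hLκ.le
      rw [habs] at hB2
      rw [hequ'] at hA
      have hexp : (x u - y u) * ((f (x u) + κ (x u)) - (f (y u) + κ (y (piD δ u))))
          = (x u - y u) * (f (x u) - f (y u))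
            + (x u - y u) * (κ (x u) - κ (y (piD δ u))) := by ring
      show 2 * (x u - y u) * ((f (x u) + κ (x u)) - (f (y u) + κ (y (piD δ u)))) < 0
      have hpos : 0 < Lκ * (Cg * δ) * ((Mf + γ) * δ) :=
        mul_pos (mul_pos hLκ hD0) (mul_pos hMf0 hδ)
      nlinarith [hA, hB2, hexp, hDkey, hpos]
  have hk : (x s - y s)^2 ≤ (Cg * δ)^2 := key s ⟨hs, le_rfl⟩
  nlinarith [hk, sq_abs (x s - y s), abs_nonneg (x s - y s), hD0]

lemma hwrc_id' : ∀ (z : ℝ → ℝ) (s τ : ℝ), 0 ≤ s → s < τ → ContinuousOn z (Set.Ico 0 τ) →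
    ContinuousWithinAt (fun u => z (id u)) (Set.Ici s) s := by
  intro z s τ hs hsτ hz
  have h : ContinuousWithinAt z (Set.Ici s) s := by
    refine (hz s ⟨hs, hsτ⟩).mono_of_mem_nhdsWithin ?_
    rw [mem_nhdsWithin]
    exact ⟨Set.Iio τ, isOpen_Iio, hsτ, fun u hu => ⟨le_trans hs hu.2, hu.1⟩⟩
  simpa [id_eq] using h

lemma hwrc_pi' {δ : ℝ} (hδ : 0 < δ) : ∀ (z : ℝ → ℝ) (s τ : ℝ), 0 ≤ s → s < τ →
    ContinuousOn z (Set.Ico 0 τ) → ContinuousWithinAt (fun u => z (piD δ u)) (Set.Ici s) s := by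
  intro z s τ hs hsτ hz
  refine ContinuousWithinAt.congr_of_eventuallyEq (continuousWithinAt_const (b := z (piD δ s))) ?_ rfl
  filter_upwards [piD_eventually_const hδ s] with u hu
  rw [hu]

/-- Uniform-in-time estimate for the term `M₃^{ε,δ}(s) =
(1/ε)·κ'(x(s))·∫_{π_δ(s)}^{s} (f(x^δ(r)) − f(x^δ(π_δ(r)))) dr
+ (1/ε)·κ'(x(s))·(f(x^δ(π_δ(s))) − f(x(π_δ(s))))·(s − π_δ(s))`, integrated against
`E(s,t) = exp(∫ₛᵗ (f'(x(u)) + κ'(x(u))) du)`. -/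
theorem stmt17
    (f κ : ℝ → ℝ) (x₀ : ℝ) (x : ℝ → ℝ)
    -- Assumption (A1)
    (lam ξ μ Lκ γ : ℝ) (q : ℕ)
    (hlam : 0 < lam) (hξ : 0 < ξ) (hμ : 0 < μ) (hLκ : 0 < Lκ) (hγ : 0 < γ)
    (hcontr : ∀ a b : ℝ, (a - b) * (f a - f b) ≤ -lam * (a - b) ^ 2)
    (hfLip : ∀ a b : ℝ, |f a - f b| ≤ (ξ * (|a| ^ q + |b| ^ q) + μ) * |a - b|)
    (hκLip : ∀ a b : ℝ, |κ a - κ b| ≤ Lκ * |a - b|)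
    (hgap : lam / 2 - Lκ > 0)
    (hκbd : ∀ a : ℝ, |κ a| ≤ γ)
    -- Assumption (A3)
    (hfd : Differentiable ℝ f) (hfd2 : Differentiable ℝ (deriv f))
    (hκd : Differentiable ℝ κ) (hκd2 : Differentiable ℝ (deriv κ))
    (K : ℝ) (hK : ∀ y : ℝ, |deriv (deriv κ) y| ≤ K)
    (cf : ℝ) (rf : ℕ) (hf2 : ∀ y : ℝ, |deriv (deriv f) y| ≤ cf * (1 + |y| ^ rf))
    (Cstar : ℝ) (hCstar : 0 < Cstar)
    (hint : ∀ m : ℕ, (m = 1 ∨ m = 2) → ∀ t : ℝ, 0 ≤ t →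
      (∫ s in (0:ℝ)..t,
        Real.exp ((m : ℝ) * ∫ u in s..t, (deriv f (x u) + deriv κ (x u)))) ≤ Cstar)
    -- the closed-loop ODE `dx/dt = f(x) + κ(x)`, `x(0) = x₀`
    (hx : ∀ t : ℝ, 0 ≤ t → x t = x₀ + ∫ s in (0:ℝ)..t, (f (x s) + κ (x s)))
    -- the sampled-data closed-loop system
    (xd : ℝ → ℝ → ℝ)
    (hxd : ∀ δ : ℝ, 0 < δ → ∀ t : ℝ, 0 ≤ t →
      xd δ t = x₀ + ∫ s in (0:ℝ)..t, (f (xd δ s) + κ (xd δ (piD δ s))))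
    :
    ∀ p : ℕ, 1 ≤ p → ∃ ε₀ : ℝ, 0 < ε₀ ∧ ∃ C : ℝ, 0 < C ∧
      ∀ ε δ : ℝ, 0 < ε → ε < ε₀ → 0 < δ → δ < ε₀ → ∀ t : ℝ, 0 ≤ t →
        |∫ s in (0:ℝ)..t,
            Real.exp (∫ u in s..t, (deriv f (x u) + deriv κ (x u))) *
              ((1 / ε) * deriv κ (x s) *
                  (∫ r in (piD δ s)..s, (f (xd δ r) - f (xd δ (piD δ r))))
                + (1 / ε) * deriv κ (x s) *
                    (f (xd δ (piD δ s)) - f (x (piD δ s))) * (s - piD δ s))| ^ p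
          ≤ C * (δ ^ p / ε ^ p) * (δ ^ p + ε ^ p + δ ^ ((p : ℝ) / 2) * ε ^ p)
            + C * δ ^ (2 * p) / ε ^ p := by
  intro p hp
  have hfc : Continuous f := hfd.continuous
  have hκc : Continuous κ := hκd.continuous
  have hgap2 : 0 < lam - Lκ := by linarith
  obtain ⟨Bc, hBcdef⟩ : ∃ Bc : ℝ, Bc = max |x₀| ((|f 0| + γ) / lam) + 1 := ⟨_, rfl⟩
  have hBc0 : 0 < Bc := by
    have h1 := abs_nonneg x₀
    have h2 := le_max_left |x₀| ((|f 0| + γ) / lam)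
    rw [hBcdef]; nlinarith
  obtain ⟨Mf, hMfdef⟩ : ∃ Mf : ℝ, Mf = |f 0| + (ξ * (Bc ^ q + 1) + μ) * Bc := ⟨_, rfl⟩
  have hMf : ∀ z : ℝ, |z| ≤ Bc → |f z| ≤ Mf := by
    intro z hz
    have h1 := hfLip z 0
    rw [sub_zero, abs_zero] at h1
    have h2 : |z| ^ q ≤ Bc ^ q := pow_le_pow_left₀ (abs_nonneg z) hz q
    have h3 : (0:ℝ) ^ q ≤ 1 := by
      rcases Nat.eq_zero_or_pos q with hq | hq
      · simp [hq]
      · rw [zero_pow (by omega : q ≠ 0)]; norm_num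
    have h4 : |f z| ≤ |f 0| + |f z - f 0| := by
      have := abs_add_le (f 0) (f z - f 0)
      simpa using this
    have hAB : ξ * (|z| ^ q + (0:ℝ) ^ q) + μ ≤ ξ * (Bc ^ q + 1) + μ := by
      have := mul_le_mul_of_nonneg_left (add_le_add h2 h3) hξ.le
      linarith
    have h5 : (ξ * (|z| ^ q + (0:ℝ) ^ q) + μ) * |z| ≤ (ξ * (Bc ^ q + 1) + μ) * Bc := by
      refine mul_le_mul hAB hz (abs_nonneg z) ?_
      have h6 : (0:ℝ) < Bc ^ q := pow_pos hBc0 q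
      nlinarith
    rw [hMfdef]
    linarith [le_trans h1 h5]
  have hMf0 : 0 < Mf + γ := by
    have h1 : 0 ≤ |f 0| := abs_nonneg _
    have h2 : (0:ℝ) < Bc ^ q := pow_pos hBc0 q
    have h3 : 0 < (ξ * (Bc ^ q + 1) + μ) * Bc := by
      refine mul_pos ?_ hBc0
      nlinarith
    rw [hMfdef]; linarith
  obtain ⟨Lf, hLfdef⟩ : ∃ Lf : ℝ, Lf = 2 * ξ * Bc ^ q + μ := ⟨_, rfl⟩
  have hLf0 : 0 < Lf := by
    have h2 : (0:ℝ) < Bc ^ q := pow_pos hBc0 q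
    rw [hLfdef]; nlinarith
  have hLfB : ∀ a b : ℝ, |a| ≤ Bc → |b| ≤ Bc → |f a - f b| ≤ Lf * |a - b| := by
    intro a b ha hb
    have h1 := hfLip a b
    have h2 : |a| ^ q ≤ Bc ^ q := pow_le_pow_left₀ (abs_nonneg a) ha q
    have h3 : |b| ^ q ≤ Bc ^ q := pow_le_pow_left₀ (abs_nonneg b) hb q
    have h4 : ξ * (|a| ^ q + |b| ^ q) + μ ≤ Lf := by
      rw [hLfdef]
      have := mul_le_mul_of_nonneg_left (add_le_add h2 h3) hξ.le
      linarith
    calc |f a - f b| ≤ (ξ * (|a| ^ q + |b| ^ q) + μ) * |a - b| := h1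
      _ ≤ Lf * |a - b| := mul_le_mul_of_nonneg_right h4 (abs_nonneg _)
  obtain ⟨Cg, hCgdef⟩ : ∃ Cg : ℝ, Cg = 2 * Lκ * (Mf + γ) / (lam - Lκ) := ⟨_, rfl⟩
  have hCg0 : 0 < Cg := by
    rw [hCgdef]
    exact div_pos (mul_pos (mul_pos two_pos hLκ) hMf0) hgap2
  obtain ⟨C₅, hC5def⟩ : ∃ C₅ : ℝ, C₅ = Lκ * Lf * ((Mf + γ) + Cg) := ⟨_, rfl⟩
  have hC50 : 0 < C₅ := by
    rw [hC5def]
    exact mul_pos (mul_pos hLκ hLf0) (add_pos hMf0 hCg0)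
  have hCp0 : (0:ℝ) < (C₅ * Cstar) ^ p + 1 := by
    have := pow_pos (mul_pos hC50 hCstar) p
    linarith
  refine ⟨1, one_pos, (C₅ * Cstar) ^ p + 1, hCp0, ?_⟩
  intro ε δ hε hε1 hδ hδ1 t ht
  -- regularity for x
  obtain ⟨hIx, hcx, hbx, hdx⟩ := main_reg f κ hfc hκc lam γ x₀ Bc Mf hlam hcontr hκbd hBcdef hMf
    id (fun s hs => ⟨hs, le_rfl⟩) (Or.inl rfl) hwrc_id' x
    (by intro u hu; simpa [id_eq] using hx u hu)
  -- regularity for xd δ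
  obtain ⟨hId, hcd, hbd2, hdd⟩ := main_reg f κ hfc hκc lam γ x₀ Bc Mf hlam hcontr hκbd hBcdef hMf
    (piD δ) (fun s hs => ⟨piD_nonneg hδ hs, piD_le hδ hs⟩)
    (Or.inr (fun z => measurable_comp_piD z δ)) (hwrc_pi' hδ) (xd δ) (hxd δ hδ)
  simp only [id_eq] at hIx hdx
  -- initial values
  have hx0 : x 0 = x₀ := by
    have := hx 0 le_rfl; simpa [intervalIntegral.integral_same] using this
  have hxd0 : xd δ 0 = x₀ := by
    have := hxd δ hδ 0 le_rfl; simpa [intervalIntegral.integral_same] using this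
  -- one-step estimate for xd
  have hstep : ∀ r : ℝ, 0 ≤ r → |xd δ r - xd δ (piD δ r)| ≤ (Mf + γ) * δ := by
    intro r hr
    have hπ0 : 0 ≤ piD δ r := piD_nonneg hδ hr
    have hπr : piD δ r ≤ r := piD_le hδ hr
    have h1 := hxd δ hδ r hr
    have h2 := hxd δ hδ (piD δ r) hπ0
    have hI1 : IntervalIntegrable (fun s => f (xd δ s) + κ (xd δ (piD δ s))) volume 0 (piD δ r) :=
      hId _ hπ0
    have hI2 : IntervalIntegrable (fun s => f (xd δ s) + κ (xd δ (piD δ s))) volume (piD δ r) r :=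
      (hId r hr).mono_set (by
        rw [uIcc_of_le hπr, uIcc_of_le hr]; exact Icc_subset_Icc hπ0 le_rfl)
    have hadd := intervalIntegral.integral_add_adjacent_intervals hI1 hI2
    have hdiff : xd δ r - xd δ (piD δ r)
        = ∫ s in (piD δ r)..r, (f (xd δ s) + κ (xd δ (piD δ s))) := by
      rw [h1, h2, ← hadd]; ring
    rw [hdiff]
    have hb := intervalIntegral.norm_integral_le_of_norm_le_const (C := Mf + γ)
      (f := fun s => f (xd δ s) + κ (xd δ (piD δ s))) (a := piD δ r) (b := r) ?_
    · rw [Real.norm_eq_abs] at hb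
      refine le_trans hb ?_
      have h5 : |r - piD δ r| = r - piD δ r := abs_of_nonneg (by linarith)
      rw [h5]
      exact mul_le_mul_of_nonneg_left (by linarith [sub_piD_lt hδ r]) hMf0.le
    · intro u hu
      rw [uIoc_of_le hπr] at hu
      have hu0 : 0 ≤ u := le_trans hπ0 hu.1.le
      rw [Real.norm_eq_abs]
      calc |f (xd δ u) + κ (xd δ (piD δ u))| ≤ |f (xd δ u)| + |κ (xd δ (piD δ u))| := abs_add_le _ _
        _ ≤ Mf + γ := add_le_add (hMf _ (hbd2 u hu0)) (hκbd _)
  -- Gronwall comparison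
  have hgron : ∀ s : ℝ, 0 ≤ s → |x s - xd δ s| ≤ Cg * δ := by
    refine gronwall_est f κ lam Lκ Mf γ Cg δ hδ hLκ hMf0 hgap2 hCg0 hCgdef hcontr hκLip
      x (xd δ) hcx hcd hdx hdd ?_ hstep
    rw [hx0, hxd0]
  -- derivative bound for κ
  have hLκ' : ∀ z : ℝ, |deriv κ z| ≤ Lκ := abs_deriv_le_of_lipschitz hκd hκLip
  -- pointwise bound on M₃
  have hM3bd : ∀ s : ℝ, 0 ≤ s →
      |(1 / ε) * deriv κ (x s) *
          (∫ r in (piD δ s)..s, (f (xd δ r) - f (xd δ (piD δ r))))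
        + (1 / ε) * deriv κ (x s) *
            (f (xd δ (piD δ s)) - f (x (piD δ s))) * (s - piD δ s)| ≤ C₅ * δ^2 / ε := by
    intro s hs
    have hπ0 : 0 ≤ piD δ s := piD_nonneg hδ hs
    have hπs : piD δ s ≤ s := piD_le hδ hs
    have hsπ : s - piD δ s ≤ δ := (sub_piD_lt hδ s).le
    have hκ' := hLκ' (x s)
    have hinner : |∫ r in (piD δ s)..s, (f (xd δ r) - f (xd δ (piD δ r)))|
        ≤ Lf * ((Mf + γ) * δ) * δ := by
      have hb := intervalIntegral.norm_integral_le_of_norm_le_const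
        (C := Lf * ((Mf + γ) * δ))
        (f := fun r => f (xd δ r) - f (xd δ (piD δ r))) (a := piD δ s) (b := s) ?_
      · rw [Real.norm_eq_abs] at hb
        refine le_trans hb ?_
        have h5 : |s - piD δ s| = s - piD δ s := abs_of_nonneg (by linarith)
        rw [h5]
        exact mul_le_mul_of_nonneg_left hsπ (le_of_lt (mul_pos hLf0 (mul_pos hMf0 hδ)))
      · intro u hu
        rw [uIoc_of_le hπs] at hu
        have hu0 : 0 ≤ u := le_trans hπ0 hu.1.le
        rw [Real.norm_eq_abs]
        refine le_trans (hLfB (xd δ u) (xd δ (piD δ u)) (hbd2 u hu0)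
          (hbd2 _ (piD_nonneg hδ hu0))) ?_
        exact mul_le_mul_of_nonneg_left (hstep u hu0) hLf0.le
    have hmid : |f (xd δ (piD δ s)) - f (x (piD δ s))| ≤ Lf * (Cg * δ) := by
      refine le_trans (hLfB (xd δ (piD δ s)) (x (piD δ s)) (hbd2 _ hπ0) (hbx _ hπ0)) ?_
      refine mul_le_mul_of_nonneg_left ?_ hLf0.le
      rw [abs_sub_comm]
      exact hgron _ hπ0
    have heps : (0:ℝ) < 1 / ε := by rw [one_div]; exact inv_pos.2 hε
    have e1 : |1 / ε| = 1 / ε := abs_of_pos heps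
    have habs_sπ : |s - piD δ s| ≤ δ := by
      rw [abs_of_nonneg (by linarith)]; exact hsπ
    have t1 : |(1 / ε) * deriv κ (x s) *
        (∫ r in (piD δ s)..s, (f (xd δ r) - f (xd δ (piD δ r))))|
        ≤ (1 / ε) * Lκ * (Lf * ((Mf + γ) * δ) * δ) := by
      rw [abs_mul, abs_mul, e1]
      have h1 : |deriv κ (x s)| * |∫ r in (piD δ s)..s, (f (xd δ r) - f (xd δ (piD δ r)))|
          ≤ Lκ * (Lf * ((Mf + γ) * δ) * δ) :=
        mul_le_mul hκ' hinner (abs_nonneg _) hLκ.le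
      calc 1 / ε * |deriv κ (x s)| * |∫ r in (piD δ s)..s, (f (xd δ r) - f (xd δ (piD δ r)))|
          = 1 / ε * (|deriv κ (x s)| * |∫ r in (piD δ s)..s, (f (xd δ r) - f (xd δ (piD δ r)))|) := by
            ring
        _ ≤ 1 / ε * (Lκ * (Lf * ((Mf + γ) * δ) * δ)) :=
            mul_le_mul_of_nonneg_left h1 heps.le
        _ = (1 / ε) * Lκ * (Lf * ((Mf + γ) * δ) * δ) := by ring
    have t2 : |(1 / ε) * deriv κ (x s) *
        (f (xd δ (piD δ s)) - f (x (piD δ s))) * (s - piD δ s)|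
        ≤ (1 / ε) * Lκ * (Lf * (Cg * δ) * δ) := by
      rw [abs_mul, abs_mul, abs_mul, e1]
      have h1 : |deriv κ (x s)| * |f (xd δ (piD δ s)) - f (x (piD δ s))| * |s - piD δ s|
          ≤ Lκ * (Lf * (Cg * δ)) * δ := by
        refine mul_le_mul (mul_le_mul hκ' hmid (abs_nonneg _) hLκ.le) habs_sπ (abs_nonneg _) ?_
        exact le_of_lt (mul_pos hLκ (mul_pos hLf0 (mul_pos hCg0 hδ)))
      calc 1 / ε * |deriv κ (x s)| * |f (xd δ (piD δ s)) - f (x (piD δ s))| * |s - piD δ s|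
          = 1 / ε * (|deriv κ (x s)| * |f (xd δ (piD δ s)) - f (x (piD δ s))| * |s - piD δ s|) := by
            ring
        _ ≤ 1 / ε * (Lκ * (Lf * (Cg * δ)) * δ) := mul_le_mul_of_nonneg_left h1 (by positivity)
        _ = (1 / ε) * Lκ * (Lf * (Cg * δ) * δ) := by ring
    calc |(1 / ε) * deriv κ (x s) *
          (∫ r in (piD δ s)..s, (f (xd δ r) - f (xd δ (piD δ r))))
        + (1 / ε) * deriv κ (x s) * (f (xd δ (piD δ s)) - f (x (piD δ s))) * (s - piD δ s)|
        ≤ |(1 / ε) * deriv κ (x s) *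
          (∫ r in (piD δ s)..s, (f (xd δ r) - f (xd δ (piD δ r))))|
        + |(1 / ε) * deriv κ (x s) * (f (xd δ (piD δ s)) - f (x (piD δ s))) * (s - piD δ s)| :=
          abs_add_le _ _
      _ ≤ (1 / ε) * Lκ * (Lf * ((Mf + γ) * δ) * δ) + (1 / ε) * Lκ * (Lf * (Cg * δ) * δ) :=
          add_le_add t1 t2
      _ = C₅ * δ^2 / ε := by rw [hC5def]; field_simp
  -- integrability of the exponential weight
  have hhc : ContinuousOn (fun u => deriv f (x u) + deriv κ (x u)) (Ici 0) :=
    (hfd2.continuous.comp_continuousOn hcx).add (hκd2.continuous.comp_continuousOn hcx)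
  have hhint : ∀ a b : ℝ, 0 ≤ a → 0 ≤ b →
      IntervalIntegrable (fun u => deriv f (x u) + deriv κ (x u)) volume a b := by
    intro a b ha hb
    apply ContinuousOn.intervalIntegrable
    exact hhc.mono fun u hu => le_trans (le_min ha hb) hu.1
  have hEcont : ContinuousOn
      (fun s => Real.exp (∫ u in s..t, (deriv f (x u) + deriv κ (x u)))) (Icc 0 t) := by
    have hprim : ContinuousOn (fun s => ∫ u in (0:ℝ)..s, (deriv f (x u) + deriv κ (x u)))
        (Icc 0 t) := by
      have := intervalIntegral.continuousOn_primitive_interval' (hhint 0 t le_rfl ht)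
        (by rw [uIcc_of_le ht]; exact left_mem_Icc.2 ht)
      rwa [uIcc_of_le ht] at this
    have hbig : ContinuousOn (fun s => Real.exp ((∫ u in (0:ℝ)..t,
        (deriv f (x u) + deriv κ (x u))) - ∫ u in (0:ℝ)..s, (deriv f (x u) + deriv κ (x u))))
        (Icc 0 t) :=
      Real.continuous_exp.comp_continuousOn (continuousOn_const.sub hprim)
    refine hbig.congr fun s hs => ?_
    congr 1
    rw [← intervalIntegral.integral_add_adjacent_intervals (hhint 0 s le_rfl hs.1)
      (hhint s t hs.1 ht)]
    ring
  have hEint : IntervalIntegrable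
      (fun s => Real.exp (∫ u in s..t, (deriv f (x u) + deriv κ (x u)))) volume 0 t := by
    apply ContinuousOn.intervalIntegrable
    rwa [uIcc_of_le ht]
  have hECstar : (∫ s in (0:ℝ)..t,
      Real.exp (∫ u in s..t, (deriv f (x u) + deriv κ (x u)))) ≤ Cstar := by
    have := hint 1 (Or.inl rfl) t ht
    simpa using this
  -- main dichotomy
  by_cases hFI : IntervalIntegrable (fun s =>
      Real.exp (∫ u in s..t, (deriv f (x u) + deriv κ (x u))) *
        ((1 / ε) * deriv κ (x s) *
            (∫ r in (piD δ s)..s, (f (xd δ r) - f (xd δ (piD δ r))))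
          + (1 / ε) * deriv κ (x s) *
              (f (xd δ (piD δ s)) - f (x (piD δ s))) * (s - piD δ s))) volume 0 t
  · -- integrable case
    have habs1 := intervalIntegral.abs_integral_le_integral_abs (μ := volume) ht
      (f := fun s => Real.exp (∫ u in s..t, (deriv f (x u) + deriv κ (x u))) *
        ((1 / ε) * deriv κ (x s) *
            (∫ r in (piD δ s)..s, (f (xd δ r) - f (xd δ (piD δ r))))
          + (1 / ε) * deriv κ (x s) *
              (f (xd δ (piD δ s)) - f (x (piD δ s))) * (s - piD δ s)))
    have hptwise : ∀ s ∈ Icc 0 t,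
        |Real.exp (∫ u in s..t, (deriv f (x u) + deriv κ (x u))) *
          ((1 / ε) * deriv κ (x s) *
              (∫ r in (piD δ s)..s, (f (xd δ r) - f (xd δ (piD δ r))))
            + (1 / ε) * deriv κ (x s) *
                (f (xd δ (piD δ s)) - f (x (piD δ s))) * (s - piD δ s))|
        ≤ (C₅ * δ^2 / ε) * Real.exp (∫ u in s..t, (deriv f (x u) + deriv κ (x u))) := by
      intro s hs
      rw [abs_mul, abs_of_pos (Real.exp_pos _), mul_comm]
      exact mul_le_mul_of_nonneg_right (hM3bd s hs.1) (Real.exp_pos _).le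
    have h2 := intervalIntegral.integral_mono_on ht hFI.abs (hEint.const_mul (C₅ * δ^2 / ε))
      hptwise
    rw [intervalIntegral.integral_const_mul] at h2
    have h4 : |∫ s in (0:ℝ)..t,
        Real.exp (∫ u in s..t, (deriv f (x u) + deriv κ (x u))) *
          ((1 / ε) * deriv κ (x s) *
              (∫ r in (piD δ s)..s, (f (xd δ r) - f (xd δ (piD δ r))))
            + (1 / ε) * deriv κ (x s) *
                (f (xd δ (piD δ s)) - f (x (piD δ s))) * (s - piD δ s))|
        ≤ (C₅ * δ^2 / ε) * Cstar := by
      refine le_trans habs1 (le_trans h2 ?_)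
      have hK0 : (0:ℝ) ≤ C₅ * δ^2 / ε := le_of_lt (div_pos (mul_pos hC50 (pow_pos hδ 2)) hε)
      exact mul_le_mul_of_nonneg_left hECstar hK0
    have h5 := pow_le_pow_left₀ (abs_nonneg _) h4 p
    refine le_trans h5 ?_
    have h6 : ((C₅ * δ^2 / ε) * Cstar)^p = (C₅ * Cstar)^p * δ^(2*p) / ε^p := by
      rw [pow_mul, mul_pow, mul_pow, div_pow, mul_pow]
      ring
    rw [h6]
    have h7 : (C₅ * Cstar)^p * δ^(2*p) / ε^p ≤ ((C₅ * Cstar)^p + 1) * δ^(2*p) / ε^p := by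
      have : (0:ℝ) ≤ δ^(2*p) / ε^p := div_nonneg (pow_nonneg hδ.le _) (pow_nonneg hε.le _)
      have h8 : (C₅ * Cstar)^p ≤ (C₅ * Cstar)^p + 1 := by linarith
      calc (C₅ * Cstar)^p * δ^(2*p) / ε^p = (C₅ * Cstar)^p * (δ^(2*p) / ε^p) := by ring
        _ ≤ ((C₅ * Cstar)^p + 1) * (δ^(2*p) / ε^p) := mul_le_mul_of_nonneg_right h8 this
        _ = ((C₅ * Cstar)^p + 1) * δ^(2*p) / ε^p := by ring
    refine le_trans h7 ?_
    have hrp : (0:ℝ) ≤ δ ^ ((p : ℝ) / 2) := Real.rpow_nonneg hδ.le _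
    have h9 : (0:ℝ) ≤ ((C₅ * Cstar)^p + 1) * (δ ^ p / ε ^ p) *
        (δ ^ p + ε ^ p + δ ^ ((p : ℝ) / 2) * ε ^ p) := by
      refine mul_nonneg (mul_nonneg hCp0.le (div_nonneg (pow_nonneg hδ.le _)
        (pow_nonneg hε.le _))) ?_
      have h10 : (0:ℝ) ≤ δ ^ p := pow_nonneg hδ.le _
      have h11 : (0:ℝ) ≤ ε ^ p := pow_nonneg hε.le _
      have h12 : (0:ℝ) ≤ δ ^ ((p : ℝ) / 2) * ε ^ p := mul_nonneg hrp h11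
      linarith
    linarith
  · -- non-integrable case : the integral is zero
    rw [intervalIntegral.integral_undef hFI]
    have hp0 : p ≠ 0 := by omega
    rw [abs_zero, zero_pow hp0]
    have hrp : (0:ℝ) ≤ δ ^ ((p : ℝ) / 2) := Real.rpow_nonneg hδ.le _
    have h10 : (0:ℝ) ≤ δ ^ p := pow_nonneg hδ.le _
    have h11 : (0:ℝ) ≤ ε ^ p := pow_nonneg hε.le _
    have h13 : (0:ℝ) ≤ ((C₅ * Cstar) ^ p + 1) * (δ ^ p / ε ^ p) *
        (δ ^ p + ε ^ p + δ ^ ((p : ℝ) / 2) * ε ^ p) := by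
      refine mul_nonneg (mul_nonneg hCp0.le (div_nonneg h10 h11)) ?_
      have h12 : (0:ℝ) ≤ δ ^ ((p : ℝ) / 2) * ε ^ p := mul_nonneg hrp h11
      linarith
    have h14 : (0:ℝ) ≤ ((C₅ * Cstar) ^ p + 1) * δ ^ (2 * p) / ε ^ p :=
      div_nonneg (mul_nonneg hCp0.le (pow_nonneg hδ.le _)) h11
    linarith
end

section
/- Under Assumptions (A1) and (A3), define for ε, δ > 0 and s ≥ 0 the Taylor remainder R_s^{ε,δ} := ( f(x^δ(s)) − f(x(s)) − f'(x(s))·(x^δ(s) − x(s)) )/ε + ( κ(x^δ(s)) − κ(x(s)) − κ'(x(s))·(x^δ(s) − x(s)) )/ε + ( κ(x^δ(π_δ(s))) − κ(x^δ(s)) − κ'(x(s))·(x^δ(π_δ(s)) − x^δ(s)) )/ε. Then for every integer p ≥ 1 there exist ε₀ > 0 and a constant C > 0, independent of t, ε and δ, such that for all ε, δ ∈ (0, ε₀) and all t ≥ 0: |∫₀ᵗ E(s,t)·R_s^{ε,δ} ds|^p ≤ (C/ε^p)·( ε^{2p} + δ^{2p} + ε^{2p}·δ^p ). -/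
open Set MeasureTheory intervalIntegral

namespace Stmt19Aux

/-- Second-order Taylor bound from a bound on the second derivative on a convex set. -/
lemma taylor_bound {F : ℝ → ℝ} (hF : Differentiable ℝ F) (hF2 : Differentiable ℝ (deriv F))
    {S : Set ℝ} (hS : Convex ℝ S) {M2 : ℝ} (hM : ∀ y ∈ S, |deriv (deriv F) y| ≤ M2)
    {a b : ℝ} (ha : a ∈ S) (hb : b ∈ S) :
    |F b - F a - deriv F a * (b - a)| ≤ M2 * (b - a) ^ 2 := by
  have hU : uIcc a b ⊆ S := hS.ordConnected.uIcc_subset ha hb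
  have hM2nn : 0 ≤ M2 := le_trans (abs_nonneg _) (hM a ha)
  have hlip : ∀ y ∈ uIcc a b, |deriv F y - deriv F a| ≤ M2 * |b - a| := by
    intro y hy
    have h1 : ‖deriv F y - deriv F a‖ ≤ M2 * ‖y - a‖ :=
      (convex_uIcc a b).norm_image_sub_le_of_norm_hasDerivWithin_le
        (fun z _ => (hF2 z).hasDerivAt.hasDerivWithinAt)
        (fun z hz => hM z (hU hz)) left_mem_uIcc hy
    calc |deriv F y - deriv F a| ≤ M2 * |y - a| := h1
      _ ≤ M2 * |b - a| := mul_le_mul_of_nonneg_left (abs_sub_left_of_mem_uIcc hy) hM2nn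
  have hd : ∀ y ∈ uIcc a b,
      HasDerivWithinAt (fun y => F y - deriv F a * y) (deriv F y - deriv F a) (uIcc a b) y := by
    intro y _
    have h2 : HasDerivAt (fun y : ℝ => deriv F a * y) (deriv F a) y := by
      simpa using (hasDerivAt_id y).const_mul (deriv F a)
    exact ((hF y).hasDerivAt.sub h2).hasDerivWithinAt
  have key : ‖(F b - deriv F a * b) - (F a - deriv F a * a)‖ ≤ (M2 * |b - a|) * ‖b - a‖ :=
    (convex_uIcc a b).norm_image_sub_le_of_norm_hasDerivWithin_le hd
      (fun y hy => by simpa [Real.norm_eq_abs] using hlip y hy) left_mem_uIcc right_mem_uIcc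
  have heq : F b - F a - deriv F a * (b - a) = (F b - deriv F a * b) - (F a - deriv F a * a) := by
    ring
  rw [heq]
  calc |(F b - deriv F a * b) - (F a - deriv F a * a)| ≤ (M2 * |b - a|) * |b - a| := by
        simpa [Real.norm_eq_abs] using key
    _ = M2 * (b - a) ^ 2 := by rw [mul_assoc, abs_mul_abs_self]; ring

/-- Global Lipschitz bound on the derivative from a bound on the second derivative. -/
lemma deriv_lip {F : ℝ → ℝ} (hF2 : Differentiable ℝ (deriv F)) {M2 : ℝ}
    (hM : ∀ y : ℝ, |deriv (deriv F) y| ≤ M2) (a b : ℝ) :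
    |deriv F b - deriv F a| ≤ M2 * |b - a| := by
  have := convex_univ.norm_image_sub_le_of_norm_hasDerivWithin_le
    (f := deriv F) (f' := deriv (deriv F)) (s := (univ : Set ℝ))
    (fun z _ => (hF2 z).hasDerivAt.hasDerivWithinAt) (fun z _ => hM z)
    (mem_univ a) (mem_univ b)
  simpa [Real.norm_eq_abs] using this

/-- Regularity and a uniform bound for a solution of the integral equation, on an interval
where the integrand is known to be locally integrable. -/
lemma L1 (f κ x g π : ℝ → ℝ) (x₀ lam c B T : ℝ)
    (hlam : 0 < lam) (hBpos : 0 < B)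
    (hdis : ∀ a b : ℝ, a * (f a + κ b) ≤ -lam * a ^ 2 + c * |a|)
    (hB0 : |x₀| ≤ B) (hBc : c < lam * B)
    (heq : ∀ t : ℝ, 0 ≤ t → x t = x₀ + ∫ s in (0:ℝ)..t, g s)
    (hg : ∀ s, g s = f (x s) + κ (x (π s)))
    (hfc : Continuous f) (hκc : Continuous κ)
    (hint : ∀ t : ℝ, 0 ≤ t → t < T → IntervalIntegrable g MeasureTheory.volume 0 t)
    (hπc : ∀ s₀ : ℝ, 0 ≤ s₀ → s₀ < T → ContinuousOn x (Set.Ico 0 T) →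
      ContinuousWithinAt (fun s => x (π s)) (Set.Ici s₀) s₀) :
    ContinuousOn x (Set.Ico 0 T) ∧ (∀ t ∈ Set.Ico (0:ℝ) T, |x t| ≤ B) ∧
      (∀ t ∈ Set.Ico (0:ℝ) T, HasDerivWithinAt x (g t) (Set.Ici t) t) := by
  have hx0 : x 0 = x₀ := by simpa using heq 0 le_rfl
  -- continuity of x on [0, T)
  have hcont : ContinuousOn x (Set.Ico 0 T) := by
    intro t ht
    obtain ⟨ht0, htT⟩ := ht
    set t' := (t + T) / 2 with ht'def
    have h1 : t < t' := by simp only [ht'def]; linarith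
    have h2 : t' < T := by simp only [ht'def]; linarith
    have h0' : 0 ≤ t' := le_trans ht0 h1.le
    have hi : IntervalIntegrable g volume 0 t' := hint t' h0' h2
    have hprim : ContinuousOn (fun u => x₀ + ∫ s in (0:ℝ)..u, g s) (Icc 0 t') := by
      have := intervalIntegral.continuousOn_primitive_interval' hi
        (a := 0) Set.left_mem_uIcc
      rw [Set.uIcc_of_le h0'] at this
      exact continuousOn_const.add this
    have hxc : ContinuousOn x (Icc 0 t') :=
      hprim.congr (fun u hu => heq u hu.1)
    refine (hxc.continuousWithinAt ⟨ht0, h1.le⟩).mono_of_mem_nhdsWithin ?_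
    refine mem_nhdsWithin.mpr ⟨Iio t', isOpen_Iio, h1, ?_⟩
    intro u hu
    exact ⟨hu.2.1, hu.1.le⟩
  -- one-sided derivative
  have hderiv : ∀ t ∈ Set.Ico (0:ℝ) T, HasDerivWithinAt x (g t) (Set.Ici t) t := by
    intro t ht
    obtain ⟨ht0, htT⟩ := ht
    set t' := (t + T) / 2 with ht'def
    have h1 : t < t' := by simp only [ht'def]; linarith
    have h2 : t' < T := by simp only [ht'def]; linarith
    have h0' : 0 ≤ t' := le_trans ht0 h1.le
    have hi' : IntervalIntegrable g volume 0 t' := hint t' h0' h2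
    have hi : IntervalIntegrable g volume 0 t := hint t ht0 htT
    have hmem : Icc (0:ℝ) t' ∈ nhdsWithin t (Set.Ioi t) := by
      refine mem_nhdsWithin.mpr ⟨Iio t', isOpen_Iio, h1, ?_⟩
      intro u hu
      exact ⟨le_trans ht0 hu.2.le, hu.1.le⟩
    have hmeas : StronglyMeasurableAtFilter g (nhdsWithin t (Set.Ioi t)) volume := by
      refine ⟨Icc 0 t', hmem, ?_⟩
      have h3 : volume.restrict (Ioc (0:ℝ) t') = volume.restrict (Icc (0:ℝ) t') :=
        Measure.restrict_congr_set Ioc_ae_eq_Icc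
      have h4 : AEStronglyMeasurable g (volume.restrict (Ioc (0:ℝ) t')) :=
        ((intervalIntegrable_iff_integrableOn_Ioc_of_le h0').mp hi').aestronglyMeasurable
      rwa [h3] at h4
    have hcwa : ContinuousWithinAt g (Set.Ici t) t := by
      have hxc : ContinuousWithinAt x (Set.Ici t) t := by
        refine (hcont.continuousWithinAt ⟨ht0, htT⟩).mono_of_mem_nhdsWithin ?_
        refine mem_nhdsWithin.mpr ⟨Iio T, isOpen_Iio, htT, ?_⟩
        intro u hu
        exact ⟨le_trans ht0 hu.2, hu.1⟩
      have hgfun : g = fun s => f (x s) + κ (x (π s)) := funext hg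
      rw [hgfun]
      exact ((hfc.continuousAt.comp_continuousWithinAt hxc).add
        (hκc.continuousAt.comp_continuousWithinAt (hπc t ht0 htT hcont)))
    have key : HasDerivWithinAt (fun u => ∫ s in (0:ℝ)..u, g s) (g t) (Set.Ici t) t :=
      intervalIntegral.integral_hasDerivWithinAt_right hi hmeas
        (hcwa.mono Set.Ioi_subset_Ici_self)
    have key2 := key.const_add x₀
    exact key2.congr (fun u hu => heq u (le_trans ht0 hu)) (heq t ht0)
  refine ⟨hcont, ?_, hderiv⟩
  -- the uniform bound, via a barrier argument on x²
  intro τ hτ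
  have hIccIco : Icc (0:ℝ) τ ⊆ Set.Ico 0 T := fun u hu => ⟨hu.1, lt_of_le_of_lt hu.2 hτ.2⟩
  have hIcoIco : Set.Ico (0:ℝ) τ ⊆ Set.Ico 0 T := fun u hu => hIccIco ⟨hu.1, hu.2.le⟩
  have h2 : ∀ u ∈ Icc (0:ℝ) τ, (fun u => (x u) ^ 2) u ≤ (fun _ : ℝ => B ^ 2) u := by
    refine image_le_of_deriv_right_lt_deriv_boundary
      (f' := fun u => 2 * x u ^ 1 * g u) ?_ ?_ ?_ (B' := fun _ => 0)
      (fun _ => hasDerivAt_const _ _) ?_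
    · exact (hcont.mono hIccIco).pow 2
    · intro u hu
      exact (hderiv u (hIcoIco hu)).pow 2
    · have : (x 0) ^ 2 ≤ B ^ 2 := by
        rw [hx0]
        nlinarith [hB0, abs_nonneg x₀, sq_abs x₀]
      simpa using this
    · intro u hu hEq
      have hxB : |x u| = B := by
        have h1 : |x u| ^ 2 = B ^ 2 := by rw [sq_abs]; exact hEq
      -- |x u| = B from equality of squares and positivity
        nlinarith [abs_nonneg (x u), hBpos]
      have hgd : x u * g u ≤ -lam * (x u) ^ 2 + c * |x u| := by
        rw [hg u]; exact hdis (x u) (x (π u))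
      have hval : x u ^ 2 = B ^ 2 := hEq
      rw [hval, hxB] at hgd
      have hlt : x u * g u < 0 := by
        nlinarith [hgd, mul_pos (sub_pos.mpr hBc) hBpos]
      have : 2 * x u ^ 1 * g u < 0 := by nlinarith [hlt]
      simpa using this
  have := h2 τ ⟨hτ.1, le_refl τ⟩
  simp only at this
  nlinarith [this, abs_nonneg (x τ), sq_abs (x τ), hBpos]


/-- Full bootstrap: the integral equation forces local integrability, continuity,
a uniform bound and one-sided differentiability, globally on `[0, ∞)`. -/
lemma L2 (f κ x g π : ℝ → ℝ) (x₀ lam c B γ Mf : ℝ)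
    (hlam : 0 < lam) (hBpos : 0 < B)
    (hdis : ∀ a b : ℝ, a * (f a + κ b) ≤ -lam * a ^ 2 + c * |a|)
    (hB0 : |x₀| ≤ B) (hBc : c < lam * B)
    (heq : ∀ t : ℝ, 0 ≤ t → x t = x₀ + ∫ s in (0:ℝ)..t, g s)
    (hg : ∀ s, g s = f (x s) + κ (x (π s)))
    (hfc : Continuous f) (hκc : Continuous κ)
    (hγ : ∀ b : ℝ, |κ b| ≤ γ)
    (hMf : ∀ y : ℝ, |y| ≤ B → |f y| ≤ Mf)
    (hπc : ∀ T s₀ : ℝ, 0 ≤ s₀ → s₀ < T → ContinuousOn x (Set.Ico 0 T) →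
      ContinuousWithinAt (fun s => x (π s)) (Set.Ici s₀) s₀)
    (hreg : ∀ T' : ℝ, 0 ≤ T' → ContinuousOn x (Set.Ico 0 T') → (∀ s, T' < s → x s = x₀) →
      MeasureTheory.AEStronglyMeasurable g (MeasureTheory.volume.restrict (Set.Ioo 0 T')) ∧
      MeasureTheory.AEStronglyMeasurable g (MeasureTheory.volume.restrict (Set.Ioi T'))) :
    (∀ t : ℝ, 0 ≤ t → IntervalIntegrable g MeasureTheory.volume 0 t) ∧
      ContinuousOn x (Set.Ici 0) ∧ (∀ t : ℝ, 0 ≤ t → |x t| ≤ B) ∧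
      (∀ t : ℝ, 0 ≤ t → HasDerivWithinAt x (g t) (Set.Ici t) t) := by
  have hInt : ∀ t : ℝ, 0 ≤ t → IntervalIntegrable g volume 0 t := by
    by_contra hcon
    push_neg at hcon
    obtain ⟨t₀, ht₀, hni⟩ := hcon
    set A := {t : ℝ | 0 ≤ t ∧ ¬ IntervalIntegrable g volume 0 t} with hAdef
    have hA : t₀ ∈ A := ⟨ht₀, hni⟩
    have hbdd : BddBelow A := ⟨0, fun a ha => ha.1⟩
    set T := sInf A with hTdef
    have hT0 : 0 ≤ T := le_csInf ⟨t₀, hA⟩ (fun a ha => ha.1)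
    have hlow : ∀ t : ℝ, 0 ≤ t → t < T → IntervalIntegrable g volume 0 t := by
      intro t ht hlt
      by_contra hni'
      exact absurd (csInf_le hbdd ⟨ht, hni'⟩) (not_le.mpr hlt)
    have hhigh : ∀ s : ℝ, T < s → ¬ IntervalIntegrable g volume 0 s := by
      intro s hs hii
      have hall : ∀ a ∈ A, s ≤ a := by
        intro a ha
        by_contra hle
        push_neg at hle
        refine ha.2 (hii.mono_set ?_)
        rw [Set.uIcc_of_le ha.1, Set.uIcc_of_le (le_trans hT0 hs.le)]
        exact Set.Icc_subset_Icc le_rfl hle.le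
      exact absurd (le_csInf ⟨t₀, hA⟩ hall) (not_le.mpr hs)
    have hxconst : ∀ s : ℝ, T < s → x s = x₀ := by
      intro s hs
      rw [heq s (le_trans hT0 hs.le), intervalIntegral.integral_undef (hhigh s hs), add_zero]
    obtain ⟨hcont, hbd, -⟩ := L1 f κ x g π x₀ lam c B T hlam hBpos hdis hB0 hBc heq hg
      hfc hκc hlow (hπc T)
    obtain ⟨hm1, hm2⟩ := hreg T hT0 hcont hxconst
    have hgbd : ∀ s : ℝ, s ≠ T → 0 < s → |g s| ≤ Mf + γ := by
      intro s hne hpos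
      rcases lt_or_gt_of_ne hne with hlt | hgt
      · have hb := hbd s ⟨hpos.le, hlt⟩
        calc |g s| = |f (x s) + κ (x (π s))| := by rw [hg]
          _ ≤ |f (x s)| + |κ (x (π s))| := abs_add_le _ _
          _ ≤ Mf + γ := add_le_add (hMf _ hb) (hγ _)
      · calc |g s| = |f (x s) + κ (x (π s))| := by rw [hg]
          _ ≤ |f (x s)| + |κ (x (π s))| := abs_add_le _ _
          _ ≤ Mf + γ := by
              rw [hxconst s hgt]
              exact add_le_add (hMf _ hB0) (hγ _)
    have hglob : ∀ t : ℝ, 0 ≤ t → IntervalIntegrable g volume 0 t := by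
      intro t ht
      rw [intervalIntegrable_iff_integrableOn_Ioc_of_le ht]
      have hsub : Set.Ioc (0:ℝ) t ⊆ (Set.Ioo 0 T ∪ Set.Ioi T) ∪ {T} := by
        intro y hy
        rcases lt_trichotomy y T with h | h | h
        · exact Or.inl (Or.inl ⟨hy.1, h⟩)
        · exact Or.inr (by simp [h])
        · exact Or.inl (Or.inr h)
      have hsing : volume.restrict ({T} : Set ℝ) = 0 := by
        rw [Measure.restrict_eq_zero]
        exact measure_singleton T
      have hmeasle : volume.restrict (Set.Ioc 0 t) ≤
          (volume.restrict (Set.Ioo 0 T) + volume.restrict (Set.Ioi T)) +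
            volume.restrict ({T} : Set ℝ) := by
        calc volume.restrict (Set.Ioc 0 t)
            ≤ volume.restrict ((Set.Ioo 0 T ∪ Set.Ioi T) ∪ {T}) :=
              Measure.restrict_mono hsub le_rfl
          _ ≤ volume.restrict (Set.Ioo 0 T ∪ Set.Ioi T) + volume.restrict ({T} : Set ℝ) :=
              Measure.restrict_union_le _ _
          _ ≤ _ := add_le_add (Measure.restrict_union_le _ _) le_rfl
      have haesm : AEStronglyMeasurable g (volume.restrict (Set.Ioc 0 t)) := by
        refine AEStronglyMeasurable.mono_measure ?_ hmeasle
        refine AEStronglyMeasurable.add_measure (AEStronglyMeasurable.add_measure hm1 hm2) ?_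
        rw [hsing]
        exact aestronglyMeasurable_zero_measure g
      refine Integrable.mono' (g := fun _ => Mf + γ)
        (integrableOn_const measure_Ioc_lt_top.ne) haesm ?_
      have hae : ∀ᵐ s ∂(volume.restrict (Set.Ioc (0:ℝ) t)), s ≠ T := by
        refine ae_restrict_of_ae ?_
        have h0 : volume ({T} : Set ℝ) = 0 := measure_singleton T
        rw [MeasureTheory.ae_iff]
        convert h0 using 2
        ext y
        simp
      filter_upwards [hae, ae_restrict_mem measurableSet_Ioc] with s hne hmem
      simpa [Real.norm_eq_abs] using hgbd s hne hmem.1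
    exact hni (hglob t₀ ht₀)
  refine ⟨hInt, ?_, ?_, ?_⟩
  · intro t ht
    obtain ⟨hcont, -, -⟩ := L1 f κ x g π x₀ lam c B (t+1) hlam hBpos hdis hB0 hBc heq hg
      hfc hκc (fun u hu _ => hInt u hu) (hπc (t+1))
    refine (hcont.continuousWithinAt ⟨ht, lt_add_one t⟩).mono_of_mem_nhdsWithin ?_
    refine mem_nhdsWithin.mpr ⟨Set.Iio (t+1), isOpen_Iio, lt_add_one t, ?_⟩
    intro u hu
    exact ⟨hu.2, hu.1⟩
  · intro t ht
    obtain ⟨-, hbd, -⟩ := L1 f κ x g π x₀ lam c B (t+1) hlam hBpos hdis hB0 hBc heq hg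
      hfc hκc (fun u hu _ => hInt u hu) (hπc (t+1))
    exact hbd t ⟨ht, lt_add_one t⟩
  · intro t ht
    obtain ⟨-, -, hd⟩ := L1 f κ x g π x₀ lam c B (t+1) hlam hBpos hdis hB0 hBc heq hg
      hfc hκc (fun u hu _ => hInt u hu) (hπc (t+1))
    exact hd t ⟨ht, lt_add_one t⟩


/-- Barrier estimate for the difference of two one-sidedly differentiable flows. -/
lemma err_bound (x y g gy : ℝ → ℝ) (lam2 D ρ : ℝ)
    (hlam2 : 0 < lam2) (hρ : 0 < ρ) (hmargin : D < lam2 * ρ)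
    (h0 : y 0 = x 0)
    (hcx : ContinuousOn x (Set.Ici 0)) (hcy : ContinuousOn y (Set.Ici 0))
    (hdx : ∀ t : ℝ, 0 ≤ t → HasDerivWithinAt x (g t) (Set.Ici t) t)
    (hdy : ∀ t : ℝ, 0 ≤ t → HasDerivWithinAt y (gy t) (Set.Ici t) t)
    (hdiff : ∀ s : ℝ, 0 ≤ s →
      (y s - x s) * (gy s - g s) ≤ -lam2 * (y s - x s) ^ 2 + D * |y s - x s|) :
    ∀ s : ℝ, 0 ≤ s → |y s - x s| ≤ ρ := by
  intro τ hτ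
  have hIcc : Set.Icc (0:ℝ) τ ⊆ Set.Ici 0 := fun u hu => hu.1
  have h2 : ∀ u ∈ Set.Icc (0:ℝ) τ,
      (fun u => (y u - x u) ^ 2) u ≤ (fun _ : ℝ => ρ ^ 2) u := by
    refine image_le_of_deriv_right_lt_deriv_boundary
      (f' := fun u => 2 * (y u - x u) ^ 1 * (gy u - g u)) ?_ ?_ ?_ (B' := fun _ => 0)
      (fun _ => hasDerivAt_const _ _) ?_
    · exact ((hcy.mono hIcc).sub (hcx.mono hIcc)).pow 2
    · intro u hu
      exact ((hdy u hu.1).sub (hdx u hu.1)).pow 2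
    · simp [h0, pow_pos hρ 2, le_of_lt (pow_pos hρ 2)]
    · intro u hu hEq
      have hxB : |y u - x u| = ρ := by
        have h1 : |y u - x u| ^ 2 = ρ ^ 2 := by rw [sq_abs]; exact hEq
        nlinarith [abs_nonneg (y u - x u), hρ]
      have hgd := hdiff u hu.1
      rw [hEq, hxB] at hgd
      have hlt : (y u - x u) * (gy u - g u) < 0 := by
        nlinarith [hgd, mul_pos (sub_pos.mpr hmargin) hρ]
      have : 2 * (y u - x u) ^ 1 * (gy u - g u) < 0 := by nlinarith [hlt]
      simpa using this
  have := h2 τ ⟨hτ, le_refl τ⟩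
  simp only at this
  nlinarith [this, abs_nonneg (y τ - x τ), sq_abs (y τ - x τ), hρ]

end Stmt19Aux

set_option maxHeartbeats 1000000

/-- Noiseless remainder estimate: the Taylor remainder
`R_s^{ε,δ} = (f(x^δ(s)) − f(x(s)) − f'(x(s))·(x^δ(s) − x(s)))/ε
+ (κ(x^δ(s)) − κ(x(s)) − κ'(x(s))·(x^δ(s) − x(s)))/ε
+ (κ(x^δ(π_δ(s))) − κ(x^δ(s)) − κ'(x(s))·(x^δ(π_δ(s)) − x^δ(s)))/ε`, integrated against
`E(s,t) = exp(∫ₛᵗ (f'(x(u)) + κ'(x(u))) du)`, is uniformly small. -/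
theorem stmt19
    (f κ : ℝ → ℝ) (x₀ : ℝ) (x : ℝ → ℝ)
    -- Assumption (A1)
    (lam ξ μ Lκ γ : ℝ) (q : ℕ)
    (hlam : 0 < lam) (hξ : 0 < ξ) (hμ : 0 < μ) (hLκ : 0 < Lκ) (hγ : 0 < γ)
    (hcontr : ∀ a b : ℝ, (a - b) * (f a - f b) ≤ -lam * (a - b) ^ 2)
    (hfLip : ∀ a b : ℝ, |f a - f b| ≤ (ξ * (|a| ^ q + |b| ^ q) + μ) * |a - b|)
    (hκLip : ∀ a b : ℝ, |κ a - κ b| ≤ Lκ * |a - b|)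
    (hgap : lam / 2 - Lκ > 0)
    (hκbd : ∀ a : ℝ, |κ a| ≤ γ)
    -- Assumption (A3)
    (hfd : Differentiable ℝ f) (hfd2 : Differentiable ℝ (deriv f))
    (hκd : Differentiable ℝ κ) (hκd2 : Differentiable ℝ (deriv κ))
    (K : ℝ) (hK : ∀ y : ℝ, |deriv (deriv κ) y| ≤ K)
    (cf : ℝ) (rf : ℕ) (hf2 : ∀ y : ℝ, |deriv (deriv f) y| ≤ cf * (1 + |y| ^ rf))
    (Cstar : ℝ) (hCstar : 0 < Cstar)
    (hint : ∀ m : ℕ, (m = 1 ∨ m = 2) → ∀ t : ℝ, 0 ≤ t →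
      (∫ s in (0:ℝ)..t,
        Real.exp ((m : ℝ) * ∫ u in s..t, (deriv f (x u) + deriv κ (x u)))) ≤ Cstar)
    -- the closed-loop ODE `dx/dt = f(x) + κ(x)`, `x(0) = x₀`
    (hx : ∀ t : ℝ, 0 ≤ t → x t = x₀ + ∫ s in (0:ℝ)..t, (f (x s) + κ (x s)))
    -- the sampled-data closed-loop system
    (xd : ℝ → ℝ → ℝ)
    (hxd : ∀ δ : ℝ, 0 < δ → ∀ t : ℝ, 0 ≤ t →
      xd δ t = x₀ + ∫ s in (0:ℝ)..t, (f (xd δ s) + κ (xd δ (piD δ s))))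
    :
    ∀ p : ℕ, 1 ≤ p → ∃ ε₀ : ℝ, 0 < ε₀ ∧ ∃ C : ℝ, 0 < C ∧
      ∀ ε δ : ℝ, 0 < ε → ε < ε₀ → 0 < δ → δ < ε₀ → ∀ t : ℝ, 0 ≤ t →
        |∫ s in (0:ℝ)..t,
            Real.exp (∫ u in s..t, (deriv f (x u) + deriv κ (x u))) *
              ((f (xd δ s) - f (x s) - deriv f (x s) * (xd δ s - x s)) / ε
                + (κ (xd δ s) - κ (x s) - deriv κ (x s) * (xd δ s - x s)) / ε
                + (κ (xd δ (piD δ s)) - κ (xd δ s)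
                    - deriv κ (x s) * (xd δ (piD δ s) - xd δ s)) / ε)| ^ p
          ≤ (C / ε ^ p) * (ε ^ (2 * p) + δ ^ (2 * p) + ε ^ (2 * p) * δ ^ p) := by
  intro p hp
  have hf0 : Continuous f := hfd.continuous
  have hκ0 : Continuous κ := hκd.continuous
  set c := |f 0| + γ with hcdef
  have hdis : ∀ a b : ℝ, a * (f a + κ b) ≤ -lam * a ^ 2 + c * |a| := by
    intro a b
    have h1 := hcontr a 0
    simp only [sub_zero] at h1
    have h2 : a * f 0 ≤ |f 0| * |a| := by
      calc a * f 0 ≤ |a * f 0| := le_abs_self _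
        _ = |f 0| * |a| := by rw [abs_mul]; ring
    have h3 : a * κ b ≤ γ * |a| := by
      calc a * κ b ≤ |a * κ b| := le_abs_self _
        _ = |κ b| * |a| := by rw [abs_mul]; ring
        _ ≤ γ * |a| := mul_le_mul_of_nonneg_right (hκbd b) (abs_nonneg a)
    calc a * (f a + κ b) = a * (f a - f 0) + a * f 0 + a * κ b := by ring
      _ ≤ -lam * a ^ 2 + |f 0| * |a| + γ * |a| := by linarith
      _ = -lam * a ^ 2 + c * |a| := by rw [hcdef]; ring
  have hcnn : 0 ≤ c := add_nonneg (abs_nonneg _) hγ.le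
  set B := max |x₀| (c / lam) + 1 with hBdef
  have hmax0 : 0 ≤ max |x₀| (c / lam) := le_trans (abs_nonneg _) (le_max_left _ _)
  have hBpos : 0 < B := by rw [hBdef]; linarith
  have hB0 : |x₀| ≤ B := le_trans (le_max_left _ _) (by rw [hBdef]; linarith)
  have hBc : c < lam * B := by
    have h1 : c / lam ≤ max |x₀| (c / lam) := le_max_right _ _
    have h2 : lam * (c / lam) = c := by field_simp
    rw [hBdef]
    nlinarith [mul_le_mul_of_nonneg_left h1 hlam.le, h2, hlam]
  obtain ⟨y₀, hy₀, hy₀max⟩ := (isCompact_Icc (a := -B) (b := B)).exists_isMaxOn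
    (Set.nonempty_Icc.mpr (by linarith)) (hf0.abs.continuousOn)
  set Mf := |f y₀| with hMfdef
  have hMf : ∀ y : ℝ, |y| ≤ B → |f y| ≤ Mf := fun y hy => hy₀max (abs_le.mp hy)
  have hMfnn : 0 ≤ Mf := abs_nonneg _
  set M := Mf + γ with hMdef
  have hMpos : 0 < M := by rw [hMdef]; linarith
  have hcf : 0 ≤ cf := by
    nlinarith [hf2 0, abs_nonneg (deriv (deriv f) 0), pow_nonneg (abs_nonneg (0:ℝ)) rf]
  set Mf2 := cf * (1 + B ^ rf) with hMf2def
  have hMf2 : ∀ y ∈ Set.Icc (-B) B, |deriv (deriv f) y| ≤ Mf2 := by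
    intro y hy
    have h1 : |y| ^ rf ≤ B ^ rf := pow_le_pow_left₀ (abs_nonneg y) (abs_le.mpr hy) rf
    calc |deriv (deriv f) y| ≤ cf * (1 + |y| ^ rf) := hf2 y
      _ ≤ Mf2 := by rw [hMf2def]; nlinarith
  have hBrf : (0:ℝ) ≤ B ^ rf := pow_nonneg hBpos.le rf
  have hMf2nn : 0 ≤ Mf2 := by rw [hMf2def]; nlinarith
  have hKnn : 0 ≤ K := le_trans (abs_nonneg _) (hK 0)
  set lam2 := lam - Lκ with hlam2def
  have hlam2 : 0 < lam2 := by rw [hlam2def]; linarith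
  set C4 := Lκ * M / lam2 + 1 with hC4def
  have hC4pos : 0 < C4 := by
    have : 0 ≤ Lκ * M / lam2 := by positivity
    rw [hC4def]; linarith
  set C5 := Mf2 * C4 ^ 2 + K * C4 ^ 2 + K * M ^ 2 + K * C4 * M with hC5def
  have hC5nn : 0 ≤ C5 := by rw [hC5def]; positivity
  have hCpos : 0 < ((C5 + 1) * Cstar) ^ p := by positivity
  refine ⟨1, one_pos, ((C5 + 1) * Cstar) ^ p, hCpos, ?_⟩
  intro ε δ hε hε1 hδ hδ1 t ht
  -- sampling map facts
  have hπ0 : ∀ s : ℝ, 0 ≤ s → 0 ≤ piD δ s := by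
    intro s hs
    have h1 : (0:ℤ) ≤ ⌊s / δ⌋ := Int.floor_nonneg.mpr (div_nonneg hs hδ.le)
    have h2 : (0:ℝ) ≤ ((⌊s / δ⌋ : ℤ) : ℝ) := by exact_mod_cast h1
    exact mul_nonneg hδ.le h2
  have hπle : ∀ s : ℝ, 0 ≤ s → piD δ s ≤ s := by
    intro s _
    have h1 : ((⌊s / δ⌋ : ℤ) : ℝ) ≤ s / δ := Int.floor_le _
    calc piD δ s = δ * ((⌊s / δ⌋ : ℤ) : ℝ) := rfl
      _ ≤ δ * (s / δ) := mul_le_mul_of_nonneg_left h1 hδ.le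
      _ = s := by field_simp
  have hπgap : ∀ s : ℝ, s - piD δ s ≤ δ := by
    intro s
    have h1 : s / δ < ((⌊s / δ⌋ : ℤ) : ℝ) + 1 := Int.lt_floor_add_one _
    have h2 : s < (((⌊s / δ⌋ : ℤ) : ℝ) + 1) * δ := (div_lt_iff₀ hδ).mp h1
    have h3 : piD δ s = δ * ((⌊s / δ⌋ : ℤ) : ℝ) := rfl
    have h4 : (((⌊s / δ⌋ : ℤ) : ℝ) + 1) * δ = δ * ((⌊s / δ⌋ : ℤ) : ℝ) + δ := by ring
    rw [h3]
    linarith [h2, h4]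
  -- apply the bootstrap to the exact flow
  have hπcx : ∀ T s₀ : ℝ, 0 ≤ s₀ → s₀ < T → ContinuousOn x (Set.Ico 0 T) →
      ContinuousWithinAt (fun s => x s) (Set.Ici s₀) s₀ := by
    intro T s₀ h0 hT hcont
    refine (hcont.continuousWithinAt ⟨h0, hT⟩).mono_of_mem_nhdsWithin ?_
    refine mem_nhdsWithin.mpr ⟨Set.Iio T, isOpen_Iio, hT, ?_⟩
    intro u hu
    exact ⟨le_trans h0 hu.2, hu.1⟩
  have hregx : ∀ T' : ℝ, 0 ≤ T' → ContinuousOn x (Set.Ico 0 T') → (∀ s, T' < s → x s = x₀) →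
      AEStronglyMeasurable (fun s => f (x s) + κ (x s)) (volume.restrict (Set.Ioo 0 T')) ∧
      AEStronglyMeasurable (fun s => f (x s) + κ (x s)) (volume.restrict (Set.Ioi T')) := by
    intro T' _ hcont hconst
    constructor
    · have hxm : AEMeasurable x (volume.restrict (Set.Ioo 0 T')) :=
        (hcont.mono Set.Ioo_subset_Ico_self).aemeasurable measurableSet_Ioo
      have h1 : AEMeasurable (fun s => f (x s)) (volume.restrict (Set.Ioo 0 T')) :=
        hf0.measurable.comp_aemeasurable hxm
      have h2 : AEMeasurable (fun s => κ (x s)) (volume.restrict (Set.Ioo 0 T')) :=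
        hκ0.measurable.comp_aemeasurable hxm
      exact (h1.add h2).aestronglyMeasurable
    · refine (aestronglyMeasurable_const (b := f x₀ + κ x₀)).congr ?_
      filter_upwards [ae_restrict_mem measurableSet_Ioi] with s hs
      rw [hconst s hs]
  obtain ⟨hIntx, hcontx, hbdx, hderivx⟩ := Stmt19Aux.L2 f κ x
    (fun s => f (x s) + κ (x s)) (fun s => s) x₀ lam c B γ Mf hlam hBpos hdis hB0 hBc
    hx (fun _ => rfl) hf0 hκ0 hκbd hMf hπcx hregx
  -- apply the bootstrap to the sampled flow
  have hstep : Measurable (fun s : ℝ => xd δ (piD δ s)) := by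
    have h1 : Measurable (fun s : ℝ => ⌊s / δ⌋) :=
      Int.measurable_floor.comp (measurable_id.div_const δ)
    have h2 : Measurable ((fun n : ℤ => xd δ (δ * n)) ∘ (fun s : ℝ => ⌊s / δ⌋)) :=
      (measurable_of_countable _).comp h1
    simpa [Function.comp_def, piD] using h2
  have hκstep : Measurable (fun s : ℝ => κ (xd δ (piD δ s))) := by
    simpa [Function.comp_def] using hκ0.measurable.comp hstep
  have hπcd : ∀ T s₀ : ℝ, 0 ≤ s₀ → s₀ < T → ContinuousOn (xd δ) (Set.Ico 0 T) →
      ContinuousWithinAt (fun s => xd δ (piD δ s)) (Set.Ici s₀) s₀ := by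
    intro T s₀ _ _ _
    have hub : s₀ < δ * (((⌊s₀ / δ⌋ : ℤ) : ℝ) + 1) := by
      have h1 : s₀ / δ < ((⌊s₀ / δ⌋ : ℤ) : ℝ) + 1 := Int.lt_floor_add_one _
      have h2 : s₀ = δ * (s₀ / δ) := by field_simp
      nlinarith [h1, hδ]
    refine ContinuousWithinAt.congr_of_eventuallyEq
      (continuousWithinAt_const (b := xd δ (piD δ s₀))) ?_ rfl
    have hmem : Set.Iio (δ * (((⌊s₀ / δ⌋ : ℤ) : ℝ) + 1)) ∈ nhdsWithin s₀ (Set.Ici s₀) :=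
      mem_nhdsWithin_of_mem_nhds (Iio_mem_nhds hub)
    filter_upwards [hmem, self_mem_nhdsWithin] with s hs1 hs2
    have hfl : ⌊s / δ⌋ = ⌊s₀ / δ⌋ := by
      rw [Int.floor_eq_iff]
      constructor
      · calc ((⌊s₀ / δ⌋ : ℤ) : ℝ) ≤ s₀ / δ := Int.floor_le _
          _ ≤ s / δ := (div_le_div_iff_of_pos_right hδ).mpr hs2
      · refine (div_lt_iff₀ hδ).mpr ?_
        have := hs1
        simp only [Set.mem_Iio] at this
        linarith
    show xd δ (piD δ s) = xd δ (piD δ s₀)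
    simp only [piD, hfl]
  have hregd : ∀ T' : ℝ, 0 ≤ T' → ContinuousOn (xd δ) (Set.Ico 0 T') →
      (∀ s, T' < s → xd δ s = x₀) →
      AEStronglyMeasurable (fun s => f (xd δ s) + κ (xd δ (piD δ s)))
        (volume.restrict (Set.Ioo 0 T')) ∧
      AEStronglyMeasurable (fun s => f (xd δ s) + κ (xd δ (piD δ s)))
        (volume.restrict (Set.Ioi T')) := by
    intro T' _ hcont hconst
    constructor
    · have hxm : AEMeasurable (xd δ) (volume.restrict (Set.Ioo 0 T')) :=
        (hcont.mono Set.Ioo_subset_Ico_self).aemeasurable measurableSet_Ioo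
      have h1 : AEMeasurable (fun s => f (xd δ s)) (volume.restrict (Set.Ioo 0 T')) :=
        hf0.measurable.comp_aemeasurable hxm
      exact (h1.add hκstep.aemeasurable).aestronglyMeasurable
    · have h1 : Measurable (fun s => f x₀ + κ (xd δ (piD δ s))) := measurable_const.add hκstep
      refine h1.aestronglyMeasurable.congr ?_
      filter_upwards [ae_restrict_mem measurableSet_Ioi] with s hs
      rw [hconst s hs]
  obtain ⟨hIntd, hcontd, hbdd, hderivd⟩ := Stmt19Aux.L2 f κ (xd δ)
    (fun s => f (xd δ s) + κ (xd δ (piD δ s))) (piD δ) x₀ lam c B γ Mf hlam hBpos hdis hB0 hBc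
    (hxd δ hδ) (fun _ => rfl) hf0 hκ0 hκbd hMf hπcd hregd
  -- the sampled flow moves at most M·δ within a sampling interval
  have hgdbd : ∀ u : ℝ, 0 ≤ u → |f (xd δ u) + κ (xd δ (piD δ u))| ≤ M := by
    intro u hu
    calc |f (xd δ u) + κ (xd δ (piD δ u))| ≤ |f (xd δ u)| + |κ (xd δ (piD δ u))| := abs_add_le _ _
      _ ≤ Mf + γ := add_le_add (hMf _ (hbdd u hu)) (hκbd _)
  have hhold : ∀ s : ℝ, 0 ≤ s → |xd δ s - xd δ (piD δ s)| ≤ M * δ := by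
    intro s hs
    have hπs := hπ0 s hs
    have heqdiff : xd δ s - xd δ (piD δ s)
        = ∫ u in (piD δ s)..s, (f (xd δ u) + κ (xd δ (piD δ u))) := by
      rw [hxd δ hδ s hs, hxd δ hδ (piD δ s) hπs]
      rw [add_sub_add_left_eq_sub]
      exact (intervalIntegral.integral_interval_sub_left (hIntd s hs) (hIntd _ hπs))
    rw [heqdiff]
    have hbound : ∀ u ∈ Set.uIoc (piD δ s) s, ‖f (xd δ u) + κ (xd δ (piD δ u))‖ ≤ M := by
      intro u hu
      rw [Set.uIoc_of_le (hπle s hs)] at hu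
      exact hgdbd u (le_trans hπs hu.1.le)
    calc ‖∫ u in (piD δ s)..s, (f (xd δ u) + κ (xd δ (piD δ u)))‖
        ≤ M * |s - piD δ s| := intervalIntegral.norm_integral_le_of_norm_le_const hbound
      _ ≤ M * δ := by
          rw [abs_of_nonneg (by linarith [hπle s hs])]
          exact mul_le_mul_of_nonneg_left (hπgap s) hMpos.le
  -- the error bound |xd δ s - x s| ≤ C4 δ
  have herr : ∀ s : ℝ, 0 ≤ s → |xd δ s - x s| ≤ C4 * δ := by
    have hx00 : x 0 = x₀ := by simpa using hx 0 le_rfl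
    have hxd00 : xd δ 0 = x₀ := by simpa using hxd δ hδ 0 le_rfl
    refine Stmt19Aux.err_bound x (xd δ) (fun s => f (x s) + κ (x s))
      (fun s => f (xd δ s) + κ (xd δ (piD δ s))) lam2 (Lκ * (M * δ)) (C4 * δ)
      hlam2 (by positivity) ?_ (by rw [hx00, hxd00]) hcontx hcontd hderivx hderivd ?_
    · have h1 : lam2 * (C4 * δ) = Lκ * (M * δ) + lam2 * δ := by
        rw [hC4def]
        field_simp
      rw [h1]
      nlinarith [mul_pos hlam2 hδ]
    · intro s hs
      set e := xd δ s - x s with hedef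
      have h1 : (f (xd δ s) + κ (xd δ (piD δ s))) - (f (x s) + κ (x s))
          = (f (xd δ s) - f (x s)) + (κ (xd δ (piD δ s)) - κ (x s)) := by ring
      have h2 : e * (f (xd δ s) - f (x s)) ≤ -lam * e ^ 2 := by
        have := hcontr (xd δ s) (x s)
        simpa [hedef] using this
      have h3 : e * (κ (xd δ (piD δ s)) - κ (x s)) ≤ |e| * (Lκ * (M * δ + |e|)) := by
        calc e * (κ (xd δ (piD δ s)) - κ (x s)) ≤ |e * (κ (xd δ (piD δ s)) - κ (x s))| :=
              le_abs_self _
          _ = |e| * |κ (xd δ (piD δ s)) - κ (x s)| := abs_mul _ _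
          _ ≤ |e| * (Lκ * |xd δ (piD δ s) - x s|) :=
              mul_le_mul_of_nonneg_left (hκLip _ _) (abs_nonneg e)
          _ ≤ |e| * (Lκ * (M * δ + |e|)) := by
              refine mul_le_mul_of_nonneg_left (mul_le_mul_of_nonneg_left ?_ hLκ.le) (abs_nonneg e)
              calc |xd δ (piD δ s) - x s| = |(xd δ (piD δ s) - xd δ s) + e| := by
                    rw [hedef]; ring_nf
                _ ≤ |xd δ (piD δ s) - xd δ s| + |e| := abs_add_le _ _
                _ ≤ M * δ + |e| := by
                    have := hhold s hs
                    rw [abs_sub_comm] at this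
                    linarith
      have hsq : |e| * |e| = e ^ 2 := by rw [abs_mul_abs_self]; ring
      calc e * ((f (xd δ s) + κ (xd δ (piD δ s))) - (f (x s) + κ (x s)))
          = e * (f (xd δ s) - f (x s)) + e * (κ (xd δ (piD δ s)) - κ (x s)) := by ring
        _ ≤ -lam * e ^ 2 + |e| * (Lκ * (M * δ + |e|)) := by linarith
        _ = -lam2 * e ^ 2 + (Lκ * (M * δ)) * |e| := by
            rw [hlam2def]
            linear_combination Lκ * hsq
  -- pointwise Taylor estimate on the remainder
  have hκ'lip : ∀ a b : ℝ, |deriv κ b - deriv κ a| ≤ K * |b - a| := fun a b =>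
    Stmt19Aux.deriv_lip hκd2 hK a b
  have hRbd : ∀ s : ℝ, 0 ≤ s →
      |(f (xd δ s) - f (x s) - deriv f (x s) * (xd δ s - x s)) / ε
        + (κ (xd δ s) - κ (x s) - deriv κ (x s) * (xd δ s - x s)) / ε
        + (κ (xd δ (piD δ s)) - κ (xd δ s)
            - deriv κ (x s) * (xd δ (piD δ s) - xd δ s)) / ε| ≤ C5 * δ ^ 2 / ε := by
    intro s hs
    have hxmem : x s ∈ Set.Icc (-B) B := abs_le.mp (hbdx s hs)
    have hdmem : xd δ s ∈ Set.Icc (-B) B := abs_le.mp (hbdd s hs)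
    have he : |xd δ s - x s| ≤ C4 * δ := herr s hs
    have hesq : (xd δ s - x s) ^ 2 ≤ (C4 * δ) ^ 2 := by
      rw [← sq_abs]
      exact pow_le_pow_left₀ (abs_nonneg _) he 2
    have hT1 : |f (xd δ s) - f (x s) - deriv f (x s) * (xd δ s - x s)| ≤ Mf2 * (C4 * δ) ^ 2 := by
      calc |f (xd δ s) - f (x s) - deriv f (x s) * (xd δ s - x s)|
          ≤ Mf2 * (xd δ s - x s) ^ 2 :=
            Stmt19Aux.taylor_bound hfd hfd2 (convex_Icc _ _) hMf2 hxmem hdmem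
        _ ≤ Mf2 * (C4 * δ) ^ 2 := mul_le_mul_of_nonneg_left hesq hMf2nn
    have hT2 : |κ (xd δ s) - κ (x s) - deriv κ (x s) * (xd δ s - x s)| ≤ K * (C4 * δ) ^ 2 := by
      calc |κ (xd δ s) - κ (x s) - deriv κ (x s) * (xd δ s - x s)|
          ≤ K * (xd δ s - x s) ^ 2 :=
            Stmt19Aux.taylor_bound hκd hκd2 convex_univ (fun y _ => hK y)
              (Set.mem_univ _) (Set.mem_univ _)
        _ ≤ K * (C4 * δ) ^ 2 := mul_le_mul_of_nonneg_left hesq hKnn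
    have hh : |xd δ (piD δ s) - xd δ s| ≤ M * δ := by
      rw [abs_sub_comm]; exact hhold s hs
    have hhsq : (xd δ (piD δ s) - xd δ s) ^ 2 ≤ (M * δ) ^ 2 := by
      rw [← sq_abs]; exact pow_le_pow_left₀ (abs_nonneg _) hh 2
    have hT3 : |κ (xd δ (piD δ s)) - κ (xd δ s) - deriv κ (x s) * (xd δ (piD δ s) - xd δ s)|
        ≤ K * (M * δ) ^ 2 + K * (C4 * δ) * (M * δ) := by
      have h31 : |κ (xd δ (piD δ s)) - κ (xd δ s)
          - deriv κ (xd δ s) * (xd δ (piD δ s) - xd δ s)|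
          ≤ K * (xd δ (piD δ s) - xd δ s) ^ 2 :=
        Stmt19Aux.taylor_bound hκd hκd2 convex_univ (fun y _ => hK y)
          (Set.mem_univ _) (Set.mem_univ _)
      have h32 : |(deriv κ (xd δ s) - deriv κ (x s)) * (xd δ (piD δ s) - xd δ s)|
          ≤ K * (C4 * δ) * (M * δ) := by
        rw [abs_mul]
        have h33 : |deriv κ (xd δ s) - deriv κ (x s)| ≤ K * (C4 * δ) :=
          le_trans (hκ'lip (x s) (xd δ s)) (mul_le_mul_of_nonneg_left he hKnn)
        exact mul_le_mul h33 hh (abs_nonneg _) (by positivity)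
      calc |κ (xd δ (piD δ s)) - κ (xd δ s) - deriv κ (x s) * (xd δ (piD δ s) - xd δ s)|
          = |(κ (xd δ (piD δ s)) - κ (xd δ s) - deriv κ (xd δ s) * (xd δ (piD δ s) - xd δ s))
              + (deriv κ (xd δ s) - deriv κ (x s)) * (xd δ (piD δ s) - xd δ s)| := by
            congr 1; ring
        _ ≤ |κ (xd δ (piD δ s)) - κ (xd δ s) - deriv κ (xd δ s) * (xd δ (piD δ s) - xd δ s)|
              + |(deriv κ (xd δ s) - deriv κ (x s)) * (xd δ (piD δ s) - xd δ s)| := abs_add_le _ _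
        _ ≤ K * (M * δ) ^ 2 + K * (C4 * δ) * (M * δ) :=
            add_le_add (le_trans h31 (mul_le_mul_of_nonneg_left hhsq hKnn)) h32
    have hnum : Mf2 * (C4 * δ) ^ 2 + K * (C4 * δ) ^ 2 + (K * (M * δ) ^ 2 + K * (C4 * δ) * (M * δ))
        = C5 * δ ^ 2 := by rw [hC5def]; ring
    calc |(f (xd δ s) - f (x s) - deriv f (x s) * (xd δ s - x s)) / ε
        + (κ (xd δ s) - κ (x s) - deriv κ (x s) * (xd δ s - x s)) / ε
        + (κ (xd δ (piD δ s)) - κ (xd δ s)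
            - deriv κ (x s) * (xd δ (piD δ s) - xd δ s)) / ε|
        = |((f (xd δ s) - f (x s) - deriv f (x s) * (xd δ s - x s))
            + (κ (xd δ s) - κ (x s) - deriv κ (x s) * (xd δ s - x s))
            + (κ (xd δ (piD δ s)) - κ (xd δ s)
                - deriv κ (x s) * (xd δ (piD δ s) - xd δ s))) / ε| := by
          congr 1
          ring
      _ = |(f (xd δ s) - f (x s) - deriv f (x s) * (xd δ s - x s))
            + (κ (xd δ s) - κ (x s) - deriv κ (x s) * (xd δ s - x s))
            + (κ (xd δ (piD δ s)) - κ (xd δ s)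
                - deriv κ (x s) * (xd δ (piD δ s) - xd δ s))| / ε := by
          rw [abs_div, abs_of_pos hε]
      _ ≤ (Mf2 * (C4 * δ) ^ 2 + K * (C4 * δ) ^ 2
            + (K * (M * δ) ^ 2 + K * (C4 * δ) * (M * δ))) / ε := by
          refine (div_le_div_iff_of_pos_right hε).mpr ?_
          calc |(f (xd δ s) - f (x s) - deriv f (x s) * (xd δ s - x s))
              + (κ (xd δ s) - κ (x s) - deriv κ (x s) * (xd δ s - x s))
              + (κ (xd δ (piD δ s)) - κ (xd δ s)
                  - deriv κ (x s) * (xd δ (piD δ s) - xd δ s))|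
              ≤ |(f (xd δ s) - f (x s) - deriv f (x s) * (xd δ s - x s))
                + (κ (xd δ s) - κ (x s) - deriv κ (x s) * (xd δ s - x s))|
                + |κ (xd δ (piD δ s)) - κ (xd δ s)
                    - deriv κ (x s) * (xd δ (piD δ s) - xd δ s)| := abs_add_le _ _
            _ ≤ |f (xd δ s) - f (x s) - deriv f (x s) * (xd δ s - x s)|
                + |κ (xd δ s) - κ (x s) - deriv κ (x s) * (xd δ s - x s)|
                + |κ (xd δ (piD δ s)) - κ (xd δ s)
                    - deriv κ (x s) * (xd δ (piD δ s) - xd δ s)| :=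
                add_le_add_left (abs_add_le _ _) _
            _ ≤ Mf2 * (C4 * δ) ^ 2 + K * (C4 * δ) ^ 2
                + (K * (M * δ) ^ 2 + K * (C4 * δ) * (M * δ)) := by
                have := add_le_add (add_le_add hT1 hT2) hT3
                linarith
      _ = C5 * δ ^ 2 / ε := by rw [hnum]
  -- the exponential weight
  set E := fun s => Real.exp (∫ u in s..t, (deriv f (x u) + deriv κ (x u))) with hEdef
  have hEpos : ∀ s, 0 < E s := by
    intro s; rw [hEdef]; exact Real.exp_pos _
  have hhc : ContinuousOn (fun u => deriv f (x u) + deriv κ (x u)) (Set.Ici 0) :=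
    (hfd2.continuous.comp_continuousOn hcontx).add (hκd2.continuous.comp_continuousOn hcontx)
  have hhint : ∀ a b : ℝ, 0 ≤ a → 0 ≤ b →
      IntervalIntegrable (fun u => deriv f (x u) + deriv κ (x u)) volume a b := by
    intro a b ha hb
    apply ContinuousOn.intervalIntegrable
    exact hhc.mono (fun u hu => le_trans (le_min ha hb) hu.1)
  have hEcont : ContinuousOn E (Set.Icc 0 t) := by
    have h1 : ContinuousOn (fun s => ∫ u in (0:ℝ)..s, (deriv f (x u) + deriv κ (x u)))
        (Set.Icc 0 t) := by
      have := intervalIntegral.continuousOn_primitive_interval' (hhint 0 t le_rfl ht)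
        (a := 0) Set.left_mem_uIcc
      rwa [Set.uIcc_of_le ht] at this
    have h2 : ContinuousOn (fun s => (∫ u in (0:ℝ)..t, (deriv f (x u) + deriv κ (x u)))
        - ∫ u in (0:ℝ)..s, (deriv f (x u) + deriv κ (x u))) (Set.Icc 0 t) :=
      continuousOn_const.sub h1
    have h3 : Set.EqOn (fun s => ∫ u in s..t, (deriv f (x u) + deriv κ (x u)))
        (fun s => (∫ u in (0:ℝ)..t, (deriv f (x u) + deriv κ (x u)))
          - ∫ u in (0:ℝ)..s, (deriv f (x u) + deriv κ (x u))) (Set.Icc 0 t) := by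
      intro s hs
      exact (intervalIntegral.integral_interval_sub_left (hhint 0 t le_rfl ht)
        (hhint 0 s le_rfl hs.1)).symm
    have h4 := Real.continuous_exp.comp_continuousOn (h2.congr h3)
    rw [hEdef]
    exact h4
  have hEc5int : IntervalIntegrable (fun s => E s * (C5 * δ ^ 2 / ε)) volume 0 t := by
    apply ContinuousOn.intervalIntegrable
    rw [Set.uIcc_of_le ht]
    exact hEcont.mul continuousOn_const
  have hIocIcc : Set.Ioc (0:ℝ) t ⊆ Set.Icc 0 t := Set.Ioc_subset_Icc_self
  have hRmeas : AEStronglyMeasurable (fun s => (f (xd δ s) - f (x s)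
      - deriv f (x s) * (xd δ s - x s)) / ε
      + (κ (xd δ s) - κ (x s) - deriv κ (x s) * (xd δ s - x s)) / ε
      + (κ (xd δ (piD δ s)) - κ (xd δ s)
          - deriv κ (x s) * (xd δ (piD δ s) - xd δ s)) / ε)
      (volume.restrict (Set.Ioc 0 t)) := by
    have hIoc : Set.Ioc (0:ℝ) t ⊆ Set.Ici 0 := fun u hu => hu.1.le
    have hxm : AEMeasurable x (volume.restrict (Set.Ioc 0 t)) :=
      (hcontx.mono hIoc).aemeasurable measurableSet_Ioc
    have hdm : AEMeasurable (xd δ) (volume.restrict (Set.Ioc 0 t)) :=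
      (hcontd.mono hIoc).aemeasurable measurableSet_Ioc
    have hsm : AEMeasurable (fun s => xd δ (piD δ s)) (volume.restrict (Set.Ioc 0 t)) :=
      hstep.aemeasurable
    have a1 : AEMeasurable (fun s => f (xd δ s)) (volume.restrict (Set.Ioc 0 t)) :=
      hf0.measurable.comp_aemeasurable hdm
    have a2 : AEMeasurable (fun s => f (x s)) (volume.restrict (Set.Ioc 0 t)) :=
      hf0.measurable.comp_aemeasurable hxm
    have a3 : AEMeasurable (fun s => deriv f (x s)) (volume.restrict (Set.Ioc 0 t)) :=
      hfd2.continuous.measurable.comp_aemeasurable hxm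
    have a6 : AEMeasurable (fun s => κ (xd δ s)) (volume.restrict (Set.Ioc 0 t)) :=
      hκ0.measurable.comp_aemeasurable hdm
    have a7 : AEMeasurable (fun s => κ (x s)) (volume.restrict (Set.Ioc 0 t)) :=
      hκ0.measurable.comp_aemeasurable hxm
    have a8 : AEMeasurable (fun s => deriv κ (x s)) (volume.restrict (Set.Ioc 0 t)) :=
      hκd2.continuous.measurable.comp_aemeasurable hxm
    have a9 : AEMeasurable (fun s => κ (xd δ (piD δ s))) (volume.restrict (Set.Ioc 0 t)) :=
      hκstep.aemeasurable
    refine AEMeasurable.aestronglyMeasurable ?_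
    exact ((((a1.sub a2).sub (a3.mul (hdm.sub hxm))).div_const ε).add
      (((a6.sub a7).sub (a8.mul (hdm.sub hxm))).div_const ε)).add
      (((a9.sub a6).sub (a8.mul (hsm.sub hdm))).div_const ε)
  have hGint : IntervalIntegrable (fun s => E s * ((f (xd δ s) - f (x s)
      - deriv f (x s) * (xd δ s - x s)) / ε
      + (κ (xd δ s) - κ (x s) - deriv κ (x s) * (xd δ s - x s)) / ε
      + (κ (xd δ (piD δ s)) - κ (xd δ s)
          - deriv κ (x s) * (xd δ (piD δ s) - xd δ s)) / ε)) volume 0 t := by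
    rw [intervalIntegrable_iff_integrableOn_Ioc_of_le ht]
    refine Integrable.mono'
      ((intervalIntegrable_iff_integrableOn_Ioc_of_le ht).mp hEc5int) ?_ ?_
    · exact ((hEcont.mono hIocIcc).aestronglyMeasurable measurableSet_Ioc).mul hRmeas
    · filter_upwards [ae_restrict_mem measurableSet_Ioc] with s hsmem
      rw [Real.norm_eq_abs, abs_mul, abs_of_pos (hEpos s)]
      exact mul_le_mul_of_nonneg_left (hRbd s hsmem.1.le) (hEpos s).le
  have hmain : |∫ s in (0:ℝ)..t, E s * ((f (xd δ s) - f (x s)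
      - deriv f (x s) * (xd δ s - x s)) / ε
      + (κ (xd δ s) - κ (x s) - deriv κ (x s) * (xd δ s - x s)) / ε
      + (κ (xd δ (piD δ s)) - κ (xd δ s)
          - deriv κ (x s) * (xd δ (piD δ s) - xd δ s)) / ε)|
      ≤ Cstar * (C5 * δ ^ 2 / ε) := by
    have h1 := intervalIntegral.abs_integral_le_integral_abs (μ := volume) ht
      (f := fun s => E s * ((f (xd δ s) - f (x s) - deriv f (x s) * (xd δ s - x s)) / ε
        + (κ (xd δ s) - κ (x s) - deriv κ (x s) * (xd δ s - x s)) / ε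
        + (κ (xd δ (piD δ s)) - κ (xd δ s)
            - deriv κ (x s) * (xd δ (piD δ s) - xd δ s)) / ε))
    have h2 : (∫ s in (0:ℝ)..t, |E s * ((f (xd δ s) - f (x s)
        - deriv f (x s) * (xd δ s - x s)) / ε
        + (κ (xd δ s) - κ (x s) - deriv κ (x s) * (xd δ s - x s)) / ε
        + (κ (xd δ (piD δ s)) - κ (xd δ s)
            - deriv κ (x s) * (xd δ (piD δ s) - xd δ s)) / ε)|)
        ≤ ∫ s in (0:ℝ)..t, E s * (C5 * δ ^ 2 / ε) := by
      refine intervalIntegral.integral_mono_on ht hGint.abs hEc5int ?_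
      intro s hsmem
      rw [abs_mul, abs_of_pos (hEpos s)]
      exact mul_le_mul_of_nonneg_left (hRbd s hsmem.1) (hEpos s).le
    have h3 : (∫ s in (0:ℝ)..t, E s * (C5 * δ ^ 2 / ε))
        = (∫ s in (0:ℝ)..t, E s) * (C5 * δ ^ 2 / ε) :=
      intervalIntegral.integral_mul_const _ _
    have h4 : (∫ s in (0:ℝ)..t, E s) ≤ Cstar := by
      have h5 := hint 1 (Or.inl rfl) t ht
      rw [hEdef]
      simpa using h5
    have h6 : (0:ℝ) ≤ C5 * δ ^ 2 / ε := by positivity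
    calc |∫ s in (0:ℝ)..t, E s * ((f (xd δ s) - f (x s)
        - deriv f (x s) * (xd δ s - x s)) / ε
        + (κ (xd δ s) - κ (x s) - deriv κ (x s) * (xd δ s - x s)) / ε
        + (κ (xd δ (piD δ s)) - κ (xd δ s)
            - deriv κ (x s) * (xd δ (piD δ s) - xd δ s)) / ε)|
        ≤ ∫ s in (0:ℝ)..t, E s * (C5 * δ ^ 2 / ε) := le_trans h1 h2
      _ = (∫ s in (0:ℝ)..t, E s) * (C5 * δ ^ 2 / ε) := h3
      _ ≤ Cstar * (C5 * δ ^ 2 / ε) := mul_le_mul_of_nonneg_right h4 h6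
  have hC5C : (Cstar * (C5 * δ ^ 2 / ε)) ^ p
      ≤ ((C5 + 1) * Cstar) ^ p / ε ^ p * δ ^ (2 * p) := by
    have e1 : Cstar * (C5 * δ ^ 2 / ε) = C5 * Cstar * δ ^ 2 / ε := by ring
    have e2 : (C5 * Cstar * δ ^ 2 / ε) ^ p = (C5 * Cstar) ^ p * (δ ^ 2) ^ p / ε ^ p := by
      rw [div_pow, mul_pow]
    have e3 : (C5 * Cstar) ^ p ≤ ((C5 + 1) * Cstar) ^ p := by
      refine pow_le_pow_left₀ (by positivity) ?_ p
      nlinarith [hCstar]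
    rw [e1, e2, ← pow_mul]
    rw [div_mul_eq_mul_div, div_le_div_iff₀ (by positivity) (by positivity)]
    nlinarith [e3, mul_nonneg (mul_nonneg (pow_nonneg (by positivity : (0:ℝ) ≤ (C5+1)*Cstar) p)
      (pow_nonneg hδ.le (2*p))) (pow_nonneg hε.le p),
      mul_nonneg (pow_nonneg hδ.le (2*p)) (pow_nonneg hε.le p)]
  have hfinal : (Cstar * (C5 * δ ^ 2 / ε)) ^ p
      ≤ ((C5 + 1) * Cstar) ^ p / ε ^ p * (ε ^ (2 * p) + δ ^ (2 * p) + ε ^ (2 * p) * δ ^ p) := by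
    refine le_trans hC5C ?_
    have h7 : δ ^ (2 * p) ≤ ε ^ (2 * p) + δ ^ (2 * p) + ε ^ (2 * p) * δ ^ p := by
      have h8 := pow_pos hε (2 * p)
      have h9 := mul_pos (pow_pos hε (2 * p)) (pow_pos hδ p)
      linarith
    exact mul_le_mul_of_nonneg_left h7 (by positivity)
  calc |∫ s in (0:ℝ)..t, Real.exp (∫ u in s..t, (deriv f (x u) + deriv κ (x u))) *
        ((f (xd δ s) - f (x s) - deriv f (x s) * (xd δ s - x s)) / ε
          + (κ (xd δ s) - κ (x s) - deriv κ (x s) * (xd δ s - x s)) / ε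
          + (κ (xd δ (piD δ s)) - κ (xd δ s)
              - deriv κ (x s) * (xd δ (piD δ s) - xd δ s)) / ε)| ^ p
      ≤ (Cstar * (C5 * δ ^ 2 / ε)) ^ p := pow_le_pow_left₀ (abs_nonneg _) hmain p
    _ ≤ ((C5 + 1) * Cstar) ^ p / ε ^ p * (ε ^ (2 * p) + δ ^ (2 * p) + ε ^ (2 * p) * δ ^ p) :=
        hfinal
end
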